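/- arXiv:2309.06603 — 15 statements merged into one kernel-verified Lean document; each statement's English description precedes it below -/
import Mathlib

section
/- (Rotation axis is a principal axis.) Let Ω ∈ ℝ³ with Ω ≠ 0, and let q₁, …, q_n : ℝ → ℝ³ be differentiable curves with |q_ℓ(t)| = 1 and q_ℓ′(t) = Ω × q_ℓ(t) for all t and all ℓ. Define the angular momentum c(t) = ∑_ℓ m_ℓ q_ℓ(t) × q_ℓ′(t) and the inertia tensor I(t) = M·Id − ∑_ℓ m_ℓ q_ℓ(t) q_ℓ(t)ᵀ. Then c(t) = I(t)Ω for every t, and if c(t) is constant in t, then for every t there exists λ ∈ ℝ with I(t)Ω = λΩ, i.e. Ω is an eigenvector of the inertia tensor. -/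
open Matrix BigOperators

lemma triple (a b c : Fin 3 → ℝ) : a ⨯₃ (b ⨯₃ c) = (a ⬝ᵥ c) • b - (a ⬝ᵥ b) • c := by
  ext i
  fin_cases i <;>
    simp [crossProduct, dotProduct, Fin.sum_univ_three] <;> ring

lemma vmvmv (u v w : Fin 3 → ℝ) : vecMulVec u v *ᵥ w = (v ⬝ᵥ w) • u := by
  ext i
  simp [vecMulVec_apply, mulVec, dotProduct, Fin.sum_univ_three]
  ring

lemma crossderiv (f g : ℝ → Fin 3 → ℝ) (f' g' : Fin 3 → ℝ) (t : ℝ)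
    (hf : HasDerivAt f f' t) (hg : HasDerivAt g g' t) :
    HasDerivAt (fun t => f t ⨯₃ g t) (f' ⨯₃ g t + f t ⨯₃ g') t := by
  have hf' := hasDerivAt_pi.1 hf
  have hg' := hasDerivAt_pi.1 hg
  apply hasDerivAt_pi.2
  intro i
  fin_cases i <;>
  · simp only [crossProduct, LinearMap.mk₂_apply, Matrix.cons_val_zero, Matrix.cons_val_one,
      Matrix.head_cons, Pi.add_apply, Fin.isValue, Matrix.cons_val, Fin.zero_eta, Fin.mk_one, Fin.reduceFinMk]
    convert (((hf' _).fun_mul (hg' _)).fun_sub ((hf' _).fun_mul (hg' _))) using 1 <;> ring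


/-- (Rotation axis is a principal axis.) If each unit-vector body satisfies
`qₗ′(t) = Ω × qₗ(t)` with `Ω ≠ 0`, then the angular momentum
`c(t) = ∑ₗ mₗ qₗ(t) × qₗ′(t)` equals `I(t) Ω`, where
`I(t) = M·Id − ∑ₗ mₗ qₗ(t) qₗ(t)ᵀ`; and if `c` is constant in time, then for every `t`
there is `λ ∈ ℝ` with `I(t) Ω = λ Ω`. -/
theorem stmt1 (n : ℕ) (hn : 1 ≤ n) (m : Fin n → ℝ) (hm : ∀ ℓ, 0 < m ℓ)
    (M : ℝ) (hM : M = ∑ ℓ, m ℓ)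
    (Ω : Fin 3 → ℝ) (hΩ : Ω ≠ 0)
    (q : Fin n → ℝ → Fin 3 → ℝ)
    (hunit : ∀ ℓ t, q ℓ t ⬝ᵥ q ℓ t = 1)
    (hderiv : ∀ ℓ t, HasDerivAt (q ℓ) (Ω ⨯₃ q ℓ t) t)
    (c : ℝ → Fin 3 → ℝ)
    (hc : ∀ t, c t = ∑ ℓ, m ℓ • (q ℓ t ⨯₃ (Ω ⨯₃ q ℓ t)))
    (I : ℝ → Matrix (Fin 3) (Fin 3) ℝ)
    (hI : ∀ t, I t = M • (1 : Matrix (Fin 3) (Fin 3) ℝ)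
      - ∑ ℓ, m ℓ • vecMulVec (q ℓ t) (q ℓ t)) :
    (∀ t, c t = I t *ᵥ Ω) ∧
      ((∀ t s, c t = c s) → ∀ t, ∃ lam : ℝ, I t *ᵥ Ω = lam • Ω) := by
  have part1 : ∀ t, c t = I t *ᵥ Ω := by
    intro t
    rw [hc t, hI t, sub_mulVec, smul_mulVec, one_mulVec]
    have hmv : ∀ (A : Fin n → Matrix (Fin 3) (Fin 3) ℝ),
        (∑ ℓ, A ℓ) *ᵥ Ω = ∑ ℓ, A ℓ *ᵥ Ω := by
      intro A; ext i
      simp [mulVec, dotProduct, Matrix.sum_apply, Finset.sum_mul]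
      rw [Finset.sum_comm]
    rw [hmv]
    simp_rw [smul_mulVec, vmvmv]
    simp_rw [triple, hunit, smul_sub, one_smul]
    rw [Finset.sum_sub_distrib, ← Finset.sum_smul, ← hM]
  refine ⟨part1, fun hcon t => ?_⟩
  -- derivative of c
  have hd : HasDerivAt c (∑ ℓ, m ℓ • ((Ω ⨯₃ q ℓ t) ⨯₃ (Ω ⨯₃ q ℓ t)
      + q ℓ t ⨯₃ (Ω ⨯₃ (Ω ⨯₃ q ℓ t)))) t := by
    have : HasDerivAt (fun s => ∑ ℓ, m ℓ • (q ℓ s ⨯₃ (Ω ⨯₃ q ℓ s)))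
        (∑ ℓ, m ℓ • ((Ω ⨯₃ q ℓ t) ⨯₃ (Ω ⨯₃ q ℓ t)
          + q ℓ t ⨯₃ (Ω ⨯₃ (Ω ⨯₃ q ℓ t)))) t := by
      apply HasDerivAt.fun_sum
      intro ℓ _
      refine HasDerivAt.const_smul (m ℓ) ?_
      refine crossderiv _ _ _ _ _ (hderiv ℓ t) ?_
      have := crossderiv (fun _ => Ω) (q ℓ) 0 (Ω ⨯₃ q ℓ t) t (hasDerivAt_const t Ω)
        (hderiv ℓ t)
      simpa using this
    have hce : c = fun s => ∑ ℓ, m ℓ • (q ℓ s ⨯₃ (Ω ⨯₃ q ℓ s)) := funext hc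
    rw [hce]; exact this
  have hzero : HasDerivAt c 0 t := by
    have hce : c = fun _ => c t := funext fun s => hcon s t
    conv in c => rw [hce]
    exact hasDerivAt_const t _
  have hD : (∑ ℓ, m ℓ • ((Ω ⨯₃ q ℓ t) ⨯₃ (Ω ⨯₃ q ℓ t)
      + q ℓ t ⨯₃ (Ω ⨯₃ (Ω ⨯₃ q ℓ t)))) = 0 := hd.unique hzero
  -- rewrite D as Ω ⨯₃ c t
  have hD2 : Ω ⨯₃ c t = 0 := by
    rw [hc t]
    rw [← hD]
    rw [map_sum]
    congr 1; ext ℓ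
    rw [LinearMap.map_smul]
    congr 1
    rw [cross_self, zero_add]
    rw [triple, triple, dot_cross_self]
    rw [dot_self_cross]
    simp [dotProduct_comm]
  -- conclude
  have hΩΩ : Ω ⬝ᵥ Ω ≠ 0 := by
    intro h; exact hΩ (dotProduct_self_eq_zero.mp h)
  refine ⟨(Ω ⬝ᵥ (I t *ᵥ Ω)) / (Ω ⬝ᵥ Ω), ?_⟩
  have h3 : Ω ⨯₃ (Ω ⨯₃ (I t *ᵥ Ω)) = 0 := by
    rw [← part1, hD2, map_zero]
  rw [triple] at h3
  have h4 : (Ω ⬝ᵥ Ω) • (I t *ᵥ Ω) = (Ω ⬝ᵥ (I t *ᵥ Ω)) • Ω := by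
    have := sub_eq_zero.mp h3
    linear_combination (norm := module) -this
  calc I t *ᵥ Ω = (Ω ⬝ᵥ Ω)⁻¹ • ((Ω ⬝ᵥ Ω) • (I t *ᵥ Ω)) := (inv_smul_smul₀ hΩΩ _).symm
    _ = (Ω ⬝ᵥ Ω)⁻¹ • ((Ω ⬝ᵥ (I t *ᵥ Ω)) • Ω) := by rw [h4]
    _ = ((Ω ⬝ᵥ (I t *ᵥ Ω)) / (Ω ⬝ᵥ Ω)) • Ω := by rw [smul_smul, div_eq_inv_mul]
end

section
/- If e ∈ ℝ³ satisfies I e = λ e for some λ ∈ ℝ, then the vector v ∈ ℝ³ with components v_i = √(m_i) (q_i · e), i = 1,2,3, satisfies J v = λ v. -/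
set_option maxHeartbeats 1000000


open Matrix BigOperators

/-- If `e` is an eigenvector of the inertia tensor `I` with eigenvalue `λ`,
then the vector `v` with components `vᵢ = √(mᵢ) (qᵢ · e)` is an eigenvector of the matrix
`J`, `Jᵢⱼ = M δᵢⱼ − √(mᵢ mⱼ)(qᵢ·qⱼ)`, with the same eigenvalue. -/
theorem stmt2 (m : Fin 3 → ℝ) (hm : ∀ i, 0 < m i)
    (q : Fin 3 → Fin 3 → ℝ) (hq : ∀ i, q i ⬝ᵥ q i = 1)
    (M : ℝ) (hM : M = ∑ i, m i)
    (I : Matrix (Fin 3) (Fin 3) ℝ)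
    (hI : I = M • (1 : Matrix (Fin 3) (Fin 3) ℝ) - ∑ i, m i • vecMulVec (q i) (q i))
    (J : Matrix (Fin 3) (Fin 3) ℝ)
    (hJ : ∀ i j, J i j = (if i = j then M else 0) - Real.sqrt (m i * m j) * (q i ⬝ᵥ q j))
    (lam : ℝ) (e : Fin 3 → ℝ) (he : I *ᵥ e = lam • e)
    (v : Fin 3 → ℝ) (hv : ∀ i, v i = Real.sqrt (m i) * (q i ⬝ᵥ e)) :
    J *ᵥ v = lam • v := by
  have hab : ∀ i j, Real.sqrt (m i * m j) = Real.sqrt (m i) * Real.sqrt (m j) :=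
    fun i j => Real.sqrt_mul (hm i).le _
  have ha : ∀ j, Real.sqrt (m j) * Real.sqrt (m j) = m j :=
    fun j => Real.mul_self_sqrt (hm j).le
  funext i
  have h2 : q i ⬝ᵥ (I *ᵥ e) = lam * (q i ⬝ᵥ e) := by
    rw [he]; simp [dotProduct, Fin.sum_univ_three]; ring
  have h1 : (J *ᵥ v) i = Real.sqrt (m i) * (q i ⬝ᵥ (I *ᵥ e)) := by
    fin_cases i <;>
    · simp only [mulVec, dotProduct, hJ, hv, hI, hab, Fin.sum_univ_three,
        Matrix.sub_apply, Matrix.smul_apply, Matrix.one_apply, vecMulVec_apply,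
        Matrix.sum_apply, smul_eq_mul, Pi.sub_apply, Fin.isValue, Fin.mk_one,
        Fin.reduceFinMk]
      generalize hg0 : Real.sqrt (m 0) = a0
      generalize hg1 : Real.sqrt (m 1) = a1
      generalize hg2 : Real.sqrt (m 2) = a2
      have e0 : a0 * a0 = m 0 := hg0 ▸ ha 0
      have e1 : a1 * a1 = m 1 := hg1 ▸ ha 1
      have e2 : a2 * a2 = m 2 := hg2 ▸ ha 2
      rw [← e0, ← e1, ← e2]
      simp only [Matrix.add_apply, Matrix.smul_apply, vecMulVec_apply, smul_eq_mul,
        Fin.isValue, reduceIte, one_ne_zero, zero_ne_one, if_true, if_false]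
      norm_num [Fin.ext_iff]
      ring
  rw [h1, h2, Pi.smul_apply, hv, smul_eq_mul]
  ring
end

section
/- The matrices I and J are similar: there exists an invertible real 3×3 matrix P such that J = P I P⁻¹ (equivalently, I and J have the same characteristic polynomial). -/
open Matrix BigOperators Polynomial

namespace Stmt3Aux

variable {n : Type*} [Fintype n] [DecidableEq n]

/-- Similarity relation. -/
def Sim (A B : Matrix n n ℝ) : Prop := ∃ P : Matrix n n ℝ, IsUnit P.det ∧ B = P * A * P⁻¹

lemma Sim.of_mul_eq {A B P : Matrix n n ℝ} (hP : IsUnit P.det) (h : B * P = P * A) :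
    Sim A B := by
  refine ⟨P, hP, ?_⟩
  calc B = B * (P * P⁻¹) := by rw [Matrix.mul_nonsing_inv _ hP, Matrix.mul_one]
  _ = (B * P) * P⁻¹ := by rw [Matrix.mul_assoc]
  _ = P * A * P⁻¹ := by rw [h]

lemma Sim.symm {A B : Matrix n n ℝ} (h : Sim A B) : Sim B A := by
  obtain ⟨P, hP, rfl⟩ := h
  refine Sim.of_mul_eq (Matrix.isUnit_nonsing_inv_det P hP) ?_
  calc A * P⁻¹ = (P⁻¹ * P) * A * P⁻¹ := by rw [Matrix.nonsing_inv_mul _ hP, Matrix.one_mul]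
  _ = P⁻¹ * (P * A * P⁻¹) := by simp [Matrix.mul_assoc]

lemma Sim.trans {A B C : Matrix n n ℝ} (h1 : Sim A B) (h2 : Sim B C) : Sim A C := by
  obtain ⟨P, hP, rfl⟩ := h1
  obtain ⟨Q, hQ, rfl⟩ := h2
  refine ⟨Q * P, by rw [Matrix.det_mul]; exact hQ.mul hP, ?_⟩
  rw [Matrix.mul_inv_rev]
  simp [Matrix.mul_assoc]

lemma charpoly_conj {R : Type*} [CommRing R] (P A Q : Matrix n n R)
    (hPQ : P * Q = 1) : (P * A * Q).charpoly = A.charpoly := by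
  have h1 : (P.map (C : R →+* R[X])) * (Q.map (C : R →+* R[X])) = 1 := by
    rw [← Matrix.map_mul, hPQ, Matrix.map_one _ (map_zero _) (map_one _)]
  have hsc : ∀ B : Matrix n n R[X], B * Matrix.scalar n (X : R[X]) = Matrix.scalar n X * B :=
    fun B => (Matrix.scalar_commute (X : R[X]) (fun r => Commute.all _ _) B).symm
  have key : charmatrix (P * A * Q) = (P.map C) * charmatrix A * (Q.map C) := by
    simp only [charmatrix, RingHom.mapMatrix_apply]
    rw [Matrix.map_mul, Matrix.map_mul, Matrix.mul_sub, Matrix.sub_mul]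
    congr 1
    rw [Matrix.mul_assoc, ← hsc, ← Matrix.mul_assoc, h1, Matrix.one_mul]
  unfold Matrix.charpoly
  rw [key, Matrix.det_mul, Matrix.det_mul]
  have h2 : (P.map (C : R →+* R[X])).det * (Q.map (C : R →+* R[X])).det = 1 := by
    rw [← Matrix.det_mul, h1, Matrix.det_one]
  calc (P.map (C : R →+* R[X])).det * (charmatrix A).det * (Q.map (C : R →+* R[X])).det
      = ((P.map (C : R →+* R[X])).det * (Q.map (C : R →+* R[X])).det) * (charmatrix A).det := by
        ring
  _ = (charmatrix A).det := by rw [h2, one_mul]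

lemma charpoly_mul_comm (A B : Matrix n n ℝ) : (A * B).charpoly = (B * A).charpoly := by
  have key : (fromBlocks (A * B) 0 B (0 : Matrix n n ℝ)).charpoly
      = (fromBlocks (0 : Matrix n n ℝ) 0 B (B * A)).charpoly := by
    have hPQ : (fromBlocks 1 A 0 1 : Matrix (n ⊕ n) (n ⊕ n) ℝ) * fromBlocks 1 (-A) 0 1 = 1 := by
      rw [fromBlocks_multiply]
      simp [fromBlocks_one]
    have hX : fromBlocks (A * B) 0 B (0 : Matrix n n ℝ)
        = fromBlocks 1 A 0 1 * fromBlocks (0 : Matrix n n ℝ) 0 B (B * A)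
          * fromBlocks 1 (-A) 0 1 := by
      rw [fromBlocks_multiply, fromBlocks_multiply]
      congr 1 <;> simp [Matrix.mul_assoc]
    rw [hX, charpoly_conj _ _ _ hPQ]
  rw [Matrix.charpoly_fromBlocks_zero₁₂, Matrix.charpoly_fromBlocks_zero₁₂] at key
  have h0 : ((0 : Matrix n n ℝ)).charpoly ≠ 0 := (Matrix.charpoly_monic _).ne_zero
  rw [mul_comm] at key
  exact mul_left_cancel₀ h0 key

lemma exists_perm_of_multiset_map_eq {N : ℕ} {f g : Fin N → ℝ}
    (h : Multiset.map f Finset.univ.val = Multiset.map g Finset.univ.val) :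
    ∃ σ : Equiv.Perm (Fin N), f = g ∘ σ := by
  have hp : (List.ofFn f).Perm (List.ofFn g) := by
    rw [← Multiset.coe_eq_coe]
    simpa [Fin.univ_val_map] using h
  have key : f ∘ Tuple.sort f = g ∘ Tuple.sort g := by
    apply List.ofFn_injective
    exact List.Perm.eq_of_sortedLE
      (Tuple.monotone_sort f).sortedLE_ofFn (Tuple.monotone_sort g).sortedLE_ofFn
      (((Tuple.sort f).ofFn_comp_perm f).trans
        (hp.trans ((Tuple.sort g).ofFn_comp_perm g).symm))
  refine ⟨(Tuple.sort f).symm.trans (Tuple.sort g), ?_⟩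
  funext x
  have := congrFun key ((Tuple.sort f).symm x)
  simpa using this

lemma sim_diag_perm (d : n → ℝ) (σ : Equiv.Perm n) :
    Sim (Matrix.diagonal d) (Matrix.diagonal (d ∘ σ)) := by
  refine Sim.of_mul_eq (P := σ.toPEquiv.toMatrix) ?_ ?_
  · have : (σ.toPEquiv.toMatrix : Matrix n n ℝ) = σ.permMatrix ℝ := rfl
    rw [this, Matrix.det_permutation]
    rcases Int.units_eq_one_or (Equiv.Perm.sign σ) with h | h <;> simp [h]
  · rw [PEquiv.mul_toMatrix_toPEquiv, PEquiv.toMatrix_toPEquiv_mul]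
    ext i j
    simp only [Matrix.submatrix_apply, id_eq, Matrix.diagonal_apply, Function.comp_apply]
    by_cases hij : σ i = j
    · subst hij; simp
    · rw [if_neg, if_neg hij]
      intro hc
      exact hij (by rw [hc]; simp)

lemma sim_of_unitary (A : Matrix n n ℝ) (U : Matrix n n ℝ) (hU : U ∈ Matrix.unitaryGroup n ℝ) :
    Sim A (U * A * star U) := by
  have hUU : U * star U = 1 := Matrix.mem_unitaryGroup_iff.mp hU
  have hsUU : star U * U = 1 := Matrix.mem_unitaryGroup_iff'.mp hU
  have hinv : U⁻¹ = star U := Matrix.inv_eq_left_inv hsUU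
  exact ⟨U, isUnit_iff_exists_inv.mpr ⟨_, by rw [← Matrix.det_mul, hUU, Matrix.det_one]⟩, by
    rw [hinv]⟩

lemma herm_sim_diag {A : Matrix n n ℝ} (hA : A.IsHermitian) :
    Sim (Matrix.diagonal hA.eigenvalues) A := by
  have h := hA.spectral_theorem
  have hd : Matrix.diagonal ((RCLike.ofReal : ℝ → ℝ) ∘ hA.eigenvalues)
      = Matrix.diagonal hA.eigenvalues := by
    congr 1
  have := sim_of_unitary (Matrix.diagonal hA.eigenvalues)
    (hA.eigenvectorUnitary : Matrix n n ℝ) (hA.eigenvectorUnitary).2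
  rw [← hd] at this ⊢
  rw [Unitary.conjStarAlgAut_apply] at h
  rwa [← h] at this

lemma herm_charpoly {A : Matrix n n ℝ} [LinearOrder n] (hA : A.IsHermitian) :
    A.charpoly = ∏ i : n, (X - C (hA.eigenvalues i)) := by
  obtain ⟨P, hP, hAP⟩ := herm_sim_diag hA
  have e1 : A.charpoly = (P * Matrix.diagonal hA.eigenvalues * P⁻¹).charpoly := by
    rw [← hAP]
  rw [e1, charpoly_conj _ _ _ (Matrix.mul_nonsing_inv _ hP),
    Matrix.charpoly_of_upperTriangular _ (Matrix.blockTriangular_diagonal _)]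
  simp

/-- Hermitian real matrices with the same charpoly are similar. -/
lemma herm_sim_of_charpoly {N : ℕ} {A B : Matrix (Fin N) (Fin N) ℝ}
    (hA : A.IsHermitian) (hB : B.IsHermitian) (h : A.charpoly = B.charpoly) :
    Sim A B := by
  have hA' := herm_charpoly hA
  have hB' := herm_charpoly hB
  have hmul : ∏ i : Fin N, (X - C (hA.eigenvalues i))
      = ∏ i : Fin N, (X - C (hB.eigenvalues i)) := by
    rw [← hA', ← hB', h]
  have hroots : Multiset.map hA.eigenvalues Finset.univ.val
      = Multiset.map hB.eigenvalues Finset.univ.val := by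
    have rA := Polynomial.roots_multiset_prod_X_sub_C
      (Multiset.map hA.eigenvalues Finset.univ.val)
    have rB := Polynomial.roots_multiset_prod_X_sub_C
      (Multiset.map hB.eigenvalues Finset.univ.val)
    have hprod : (Multiset.map (fun a => X - C a)
          (Multiset.map hA.eigenvalues Finset.univ.val)).prod
        = (Multiset.map (fun a => X - C a)
          (Multiset.map hB.eigenvalues Finset.univ.val)).prod := by
      simpa [Multiset.map_map, Function.comp_def, Finset.prod_eq_multiset_prod] using hmul
    rw [← rA, ← rB, hprod]
  obtain ⟨σ, hσ⟩ := exists_perm_of_multiset_map_eq hroots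
  have s1 : Sim (Matrix.diagonal hB.eigenvalues) (Matrix.diagonal hA.eigenvalues) := by
    have := sim_diag_perm hB.eigenvalues σ
    rwa [show hB.eigenvalues ∘ σ = hA.eigenvalues from hσ.symm] at this
  exact ((herm_sim_diag hA).symm.trans s1.symm).trans (herm_sim_diag hB)

lemma Sim.smul_one_sub {A B : Matrix n n ℝ} (c : ℝ) (h : Sim A B) :
    Sim (c • (1 : Matrix n n ℝ) - A) (c • (1 : Matrix n n ℝ) - B) := by
  obtain ⟨P, hP, rfl⟩ := h
  refine ⟨P, hP, ?_⟩
  rw [Matrix.mul_sub, Matrix.sub_mul]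
  congr 1
  rw [mul_smul_comm, Matrix.mul_one, smul_mul_assoc, Matrix.mul_nonsing_inv _ hP]

end Stmt3Aux

open Stmt3Aux in
/-- The inertia tensor `I` and the matrix `J` are similar: there is an
invertible matrix `P` with `J = P * I * P⁻¹`. -/
theorem stmt3 (m : Fin 3 → ℝ) (hm : ∀ i, 0 < m i)
    (q : Fin 3 → Fin 3 → ℝ) (hq : ∀ i, q i ⬝ᵥ q i = 1)
    (M : ℝ) (hM : M = ∑ i, m i)
    (I : Matrix (Fin 3) (Fin 3) ℝ)
    (hI : I = M • (1 : Matrix (Fin 3) (Fin 3) ℝ) - ∑ i, m i • vecMulVec (q i) (q i))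
    (J : Matrix (Fin 3) (Fin 3) ℝ)
    (hJ : ∀ i j, J i j = (if i = j then M else 0) - Real.sqrt (m i * m j) * (q i ⬝ᵥ q j)) :
    ∃ P : Matrix (Fin 3) (Fin 3) ℝ, IsUnit P.det ∧ J = P * I * P⁻¹ := by
  have hm' : ∀ i, 0 ≤ m i := fun i => (hm i).le
  set A : Matrix (Fin 3) (Fin 3) ℝ := Matrix.of fun i j => Real.sqrt (m j) * q j i with hA
  have hI' : I = M • (1 : Matrix (Fin 3) (Fin 3) ℝ) - A * Aᴴ := by
    rw [hI]
    congr 1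
    ext i k
    simp only [Matrix.sum_apply, Matrix.smul_apply, Matrix.vecMulVec_apply, Matrix.mul_apply,
      Matrix.conjTranspose_apply, hA, Matrix.of_apply, star_trivial, smul_eq_mul]
    apply Finset.sum_congr rfl
    intro j _
    have h := Real.mul_self_sqrt (hm' j)
    linear_combination (-(q j i * q j k)) * h
  have hJ' : J = M • (1 : Matrix (Fin 3) (Fin 3) ℝ) - Aᴴ * A := by
    ext i j
    rw [hJ i j]
    simp only [Matrix.sub_apply, Matrix.smul_apply, Matrix.one_apply, Matrix.mul_apply,
      Matrix.conjTranspose_apply, hA, Matrix.of_apply, star_trivial, smul_eq_mul,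
      dotProduct, mul_ite, mul_one, mul_zero]
    congr 1
    rw [Real.sqrt_mul (hm' i), Finset.mul_sum]
    apply Finset.sum_congr rfl
    intro k _
    ring
  have hsim : Sim (A * Aᴴ) (Aᴴ * A) :=
    herm_sim_of_charpoly (Matrix.isHermitian_mul_conjTranspose_self A)
      (Matrix.isHermitian_conjTranspose_mul_self A) (Stmt3Aux.charpoly_mul_comm A Aᴴ)
  obtain ⟨P, hP, hsim'⟩ := hsim.smul_one_sub M
  exact ⟨P, hP, by rw [hJ', hI']; exact hsim'⟩
end

section
/- Suppose v ∈ ℝ³ with |v| = 1 satisfies J v = λ v for some λ < M. Then the vector e := (M − λ)^{−1/2} ∑_{ℓ=1}^{3} √(m_ℓ) v_ℓ q_ℓ is a unit vector, satisfies I e = λ e, and √(m_i) (q_i · e) = √(M − λ) · v_i for each i = 1,2,3. In particular, every eigenvector of J with eigenvalue λ < M corresponds to an eigenvector of the inertia tensor I with the same eigenvalue. -/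
open Matrix BigOperators

/-- If a unit vector `v` satisfies `J v = λ v` with `λ < M`, then
`e := (M − λ)^{−1/2} ∑ₗ √(mₗ) vₗ qₗ` is a unit vector with `I e = λ e`, and
`√(mᵢ)(qᵢ · e) = √(M − λ) vᵢ` for each `i`. -/
theorem stmt4 (m : Fin 3 → ℝ) (hm : ∀ i, 0 < m i)
    (q : Fin 3 → Fin 3 → ℝ) (hq : ∀ i, q i ⬝ᵥ q i = 1)
    (M : ℝ) (hM : M = ∑ i, m i)
    (I : Matrix (Fin 3) (Fin 3) ℝ)
    (hI : I = M • (1 : Matrix (Fin 3) (Fin 3) ℝ) - ∑ i, m i • vecMulVec (q i) (q i))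
    (J : Matrix (Fin 3) (Fin 3) ℝ)
    (hJ : ∀ i j, J i j = (if i = j then M else 0) - Real.sqrt (m i * m j) * (q i ⬝ᵥ q j))
    (lam : ℝ) (hlam : lam < M)
    (v : Fin 3 → ℝ) (hv : v ⬝ᵥ v = 1) (hJv : J *ᵥ v = lam • v)
    (e : Fin 3 → ℝ)
    (he : e = (Real.sqrt (M - lam))⁻¹ • ∑ i, (Real.sqrt (m i) * v i) • q i) :
    e ⬝ᵥ e = 1 ∧ I *ᵥ e = lam • e ∧
      ∀ i, Real.sqrt (m i) * (q i ⬝ᵥ e) = Real.sqrt (M - lam) * v i := by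
  have hMl : (0:ℝ) < M - lam := by linarith
  set s := Real.sqrt (M - lam) with hs
  have hs0 : 0 < s := Real.sqrt_pos.mpr hMl
  have hss : s * s = M - lam := Real.mul_self_sqrt hMl.le
  set u : Fin 3 → ℝ := ∑ i, (Real.sqrt (m i) * v i) • q i with hu
  have hue : u = s • e := by
    rw [he, smul_smul, mul_inv_cancel₀ hs0.ne', one_smul]
  have hsq : ∀ i j, Real.sqrt (m i * m j) = Real.sqrt (m i) * Real.sqrt (m j) :=
    fun i j => Real.sqrt_mul (hm i).le _
  have hmm : ∀ i, Real.sqrt (m i) * Real.sqrt (m i) = m i :=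
    fun i => Real.mul_self_sqrt (hm i).le
  have key : ∀ i, Real.sqrt (m i) * (q i ⬝ᵥ u) = (M - lam) * v i := by
    intro i
    have h := congrFun hJv i
    simp only [mulVec, dotProduct, hJ, Pi.smul_apply, smul_eq_mul, hsq,
      Fin.sum_univ_three] at h
    simp only [hu, dotProduct, Finset.sum_apply, Pi.smul_apply, Pi.add_apply, smul_eq_mul,
      Fin.sum_univ_three]
    fin_cases i <;>
      simp only [Fin.isValue, Fin.reduceFinMk, Fin.reduceEq, if_true, if_false,
        reduceIte] at h ⊢ <;>
      linear_combination -h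
  have key2 : ∀ i, Real.sqrt (m i) * (q i ⬝ᵥ e) = s * v i := by
    intro i
    have h := key i
    rw [hue, dotProduct_smul, smul_eq_mul, ← hss] at h
    have h2 : Real.sqrt (m i) * (q i ⬝ᵥ e) * s = s * v i * s := by linarith [h]
    exact mul_right_cancel₀ hs0.ne' h2
  refine ⟨?_, ?_, key2⟩
  · have h1 : u ⬝ᵥ u = ∑ i, v i * (Real.sqrt (m i) * (q i ⬝ᵥ u)) := by
      simp only [hu, dotProduct, Finset.sum_apply, Pi.smul_apply, Pi.add_apply, smul_eq_mul,
        Fin.sum_univ_three]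
      ring
    rw [Finset.sum_congr rfl fun i _ => by rw [key i]] at h1
    have h2 : u ⬝ᵥ u = (M - lam) * (v ⬝ᵥ v) := by
      rw [h1, dotProduct, Finset.mul_sum]
      exact Finset.sum_congr rfl fun i _ => by ring
    rw [hv, mul_one, hue, smul_dotProduct, dotProduct_smul, smul_eq_mul, smul_eq_mul,
      ← hss] at h2
    have h3 : s * (s * (e ⬝ᵥ e)) = s * (s * 1) := by linarith [h2]
    exact mul_left_cancel₀ hs0.ne' (mul_left_cancel₀ hs0.ne' h3)
  · funext k
    have hIek : (I *ᵥ e) k = M * e k - ∑ i, m i * (q i k * (q i ⬝ᵥ e)) := by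
      simp only [mulVec, dotProduct, hI, Matrix.sub_apply, Matrix.smul_apply,
        Matrix.one_apply, Matrix.sum_apply, Matrix.add_apply, vecMulVec_apply, smul_eq_mul,
        Fin.sum_univ_three]
      fin_cases k <;>
        simp only [Fin.isValue, Fin.reduceFinMk, Fin.reduceEq, if_true, if_false,
          reduceIte] <;> ring
    have hsum : ∑ i, m i * (q i k * (q i ⬝ᵥ e)) = (M - lam) * e k := by
      have : ∀ i, m i * (q i k * (q i ⬝ᵥ e)) = s * ((Real.sqrt (m i) * v i) * q i k) := by
        intro i
        linear_combination q i k * Real.sqrt (m i) * key2 i -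
          q i k * (q i ⬝ᵥ e) * hmm i
      rw [Finset.sum_congr rfl fun i _ => this i, ← Finset.mul_sum]
      have huk : ∑ i, (Real.sqrt (m i) * v i) * q i k = s * e k := by
        have := congrFun hue k
        simp only [hu, Finset.sum_apply, Pi.smul_apply, smul_eq_mul] at this
        rw [this]
      rw [huk, ← mul_assoc, hss]
    rw [hIek, hsum, Pi.smul_apply, smul_eq_mul]
    ring
end

section
/- Let (e_x, e_y, e_z) be an orthonormal basis of ℝ³ and let v ∈ ℝ³ be the vector with components v_i = √(m_i) (q_i · e_z), i = 1,2,3. Then the identity vᵀ J v = (∑_{ℓ=1}^{3} m_ℓ (q_ℓ·e_z)²) · (∑_{ℓ=1}^{3} m_ℓ (1 − (q_ℓ·e_z)²)) − ((e_xᵀ I e_z)² + (e_yᵀ I e_z)²) holds. -/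
open Matrix BigOperators

set_option maxHeartbeats 1000000 in
/-- For an orthonormal basis `(e_x, e_y, e_z)` of `ℝ³` and the vector `v`
with `vᵢ = √(mᵢ)(qᵢ · e_z)`, the identity
`vᵀ J v = (∑ mₗ (qₗ·e_z)²)(∑ mₗ (1 − (qₗ·e_z)²)) − ((e_xᵀ I e_z)² + (e_yᵀ I e_z)²)`
holds. -/
theorem stmt5 (m : Fin 3 → ℝ) (hm : ∀ i, 0 < m i)
    (q : Fin 3 → Fin 3 → ℝ) (hq : ∀ i, q i ⬝ᵥ q i = 1)
    (M : ℝ) (hM : M = ∑ i, m i)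
    (I : Matrix (Fin 3) (Fin 3) ℝ)
    (hI : I = M • (1 : Matrix (Fin 3) (Fin 3) ℝ) - ∑ i, m i • vecMulVec (q i) (q i))
    (J : Matrix (Fin 3) (Fin 3) ℝ)
    (hJ : ∀ i j, J i j = (if i = j then M else 0) - Real.sqrt (m i * m j) * (q i ⬝ᵥ q j))
    (ex ey ez : Fin 3 → ℝ)
    (hx : ex ⬝ᵥ ex = 1) (hy : ey ⬝ᵥ ey = 1) (hz : ez ⬝ᵥ ez = 1)
    (hxy : ex ⬝ᵥ ey = 0) (hyz : ey ⬝ᵥ ez = 0) (hzx : ez ⬝ᵥ ex = 0)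
    (v : Fin 3 → ℝ) (hv : ∀ i, v i = Real.sqrt (m i) * (q i ⬝ᵥ ez)) :
    v ⬝ᵥ (J *ᵥ v) =
      (∑ i, m i * (q i ⬝ᵥ ez) ^ 2) * (∑ i, m i * (1 - (q i ⬝ᵥ ez) ^ 2))
        - ((ex ⬝ᵥ (I *ᵥ ez)) ^ 2 + (ey ⬝ᵥ (I *ᵥ ez)) ^ 2) := by
  -- orthonormal expansion of the squared norm
  have key : ∀ u : Fin 3 → ℝ,
      u ⬝ᵥ u = (ex ⬝ᵥ u) ^ 2 + (ey ⬝ᵥ u) ^ 2 + (ez ⬝ᵥ u) ^ 2 := by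
    have hyx : ey ⬝ᵥ ex = 0 := by rwa [dotProduct_comm]
    have hzy : ez ⬝ᵥ ey = 0 := by rwa [dotProduct_comm]
    have hxz : ex ⬝ᵥ ez = 0 := by rwa [dotProduct_comm]
    intro u
    set A : Matrix (Fin 3) (Fin 3) ℝ := Matrix.of ![ex, ey, ez] with hA
    have h1 : A * Aᵀ = 1 := by
      ext i j
      fin_cases i <;> fin_cases j <;>
        simpa [hA, Matrix.mul_apply, Matrix.one_apply, dotProduct] using
          (by assumption : _)
    have h2 : Aᵀ * A = 1 := mul_eq_one_comm.mp h1
    have h3 : (A *ᵥ u) ⬝ᵥ (A *ᵥ u) = u ⬝ᵥ u := by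
      rw [Matrix.dotProduct_mulVec, ← Matrix.mulVec_transpose, Matrix.mulVec_mulVec, h2,
        Matrix.one_mulVec]
    rw [← h3]
    simp [dotProduct, Matrix.mulVec, hA, Fin.sum_univ_three]
    ring
  -- replace m by squares
  obtain ⟨s, hs0, rfl⟩ : ∃ s : Fin 3 → ℝ, (∀ i, 0 ≤ s i) ∧ m = fun i => s i * s i :=
    ⟨fun i => Real.sqrt (m i), fun i => Real.sqrt_nonneg _,
      funext fun i => (Real.mul_self_sqrt (hm i).le).symm⟩
  have hJ' : ∀ i j, J i j = (if i = j then M else 0) - s i * s j * (q i ⬝ᵥ q j) := by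
    intro i j
    have : s i * s i * (s j * s j) = (s i * s j) * (s i * s j) := by ring
    rw [hJ i j]
    simp only [this, Real.sqrt_mul_self (mul_nonneg (hs0 i) (hs0 j))]
  have hv' : ∀ i, v i = s i * (q i ⬝ᵥ ez) := by
    intro i
    rw [hv i]
    simp only [Real.sqrt_mul_self (hs0 i)]
  set w : Fin 3 → ℝ := fun k => ∑ i, (s i * s i) * (q i ⬝ᵥ ez) * q i k with hwdef
  have hww : w ⬝ᵥ w =
      ∑ i, ∑ j, ((s i * s i) * (q i ⬝ᵥ ez)) * ((s j * s j) * (q j ⬝ᵥ ez)) * (q i ⬝ᵥ q j) := by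
    simp only [hwdef, dotProduct, Fin.sum_univ_three]
    ring
  have h0 : v ⬝ᵥ (J *ᵥ v) = ∑ i, ∑ j, v i * (J i j * v j) := by
    simp only [dotProduct, Matrix.mulVec, Finset.mul_sum]
  have hL : v ⬝ᵥ (J *ᵥ v) = M * (∑ i, (s i * s i) * (q i ⬝ᵥ ez) ^ 2) - w ⬝ᵥ w := by
    rw [h0, hww]
    simp only [hJ', hv', Fin.sum_univ_three, Fin.reduceEq, reduceIte, if_true]
    ring
  have hxI : ex ⬝ᵥ (I *ᵥ ez) = -(ex ⬝ᵥ w) := by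
    have hxz : ∑ k, ez k * ex k = 0 := hzx
    simp only [Fin.sum_univ_three] at hxz
    simp only [hI, hwdef, dotProduct, Matrix.mulVec, Matrix.sub_apply, Matrix.smul_apply,
      Matrix.one_apply, Matrix.sum_apply, Matrix.add_apply, Matrix.vecMulVec_apply, Pi.smul_apply,
      smul_eq_mul, Fin.sum_univ_three, Fin.reduceEq, reduceIte, if_true]
    linear_combination M * hxz
  have hyI : ey ⬝ᵥ (I *ᵥ ez) = -(ey ⬝ᵥ w) := by
    have hyz' : ∑ k, ey k * ez k = 0 := hyz
    simp only [Fin.sum_univ_three] at hyz'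
    simp only [hI, hwdef, dotProduct, Matrix.mulVec, Matrix.sub_apply, Matrix.smul_apply,
      Matrix.one_apply, Matrix.sum_apply, Matrix.add_apply, Matrix.vecMulVec_apply, Pi.smul_apply,
      smul_eq_mul, Fin.sum_univ_three, Fin.reduceEq, reduceIte, if_true]
    linear_combination M * hyz'
  have hzw : ez ⬝ᵥ w = ∑ i, (s i * s i) * (q i ⬝ᵥ ez) ^ 2 := by
    simp only [hwdef, dotProduct, Fin.sum_univ_three]
    ring
  rw [hL, hxI, hyI, key w, hzw]
  subst hM
  simp only [Fin.sum_univ_three]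
  ring
end

section
/- (Equilateral relative equilibrium on a rotating meridian for arbitrary masses.) For any masses m₁, m₂, m₃ > 0 and any real number u, there exist θ₁, θ₂, θ₃ ∈ ℝ with θ₁ − θ₂ = θ₂ − θ₃ = 2π/3 and ω ∈ ℝ such that the equations (ω²/2) m_k sin(2θ_k) = ∑_{j≠k} m_k m_j sin(θ_k − θ_j) · u hold for k = 1,2,3. (Here u plays the role of U′(−1/2), since cos(θ_k − θ_j) = −1/2 for all pairs in such a configuration.) -/
open Real

lemma exists_phi (A B : ℝ) :
    ∃ φ : ℝ, Real.sqrt (A^2+B^2) * Real.sin φ = A ∧ Real.sqrt (A^2+B^2) * Real.cos φ = B := by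
  rcases eq_or_ne (A^2+B^2) 0 with h | h
  · have hA : A = 0 := by nlinarith [sq_nonneg A, sq_nonneg B]
    have hB : B = 0 := by nlinarith [sq_nonneg A, sq_nonneg B]
    exact ⟨0, by simp [hA, hB], by simp [hA, hB]⟩
  · have hpos : 0 < A^2 + B^2 := lt_of_le_of_ne (by positivity) (Ne.symm h)
    set r := Real.sqrt (A^2+B^2) with hr
    have hrpos : 0 < r := Real.sqrt_pos.mpr hpos
    have hr2 : r^2 = A^2 + B^2 := Real.sq_sqrt hpos.le
    have hB1' : -1 ≤ B / r := by
      rw [neg_le, ← neg_div, div_le_one hrpos]; nlinarith [sq_nonneg (B + r), sq_nonneg A]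
    have hB2 : B / r ≤ 1 := by
      rw [div_le_one hrpos]; nlinarith [sq_nonneg (B - r), sq_nonneg A]
    have hcos : Real.cos (Real.arccos (B/r)) = B/r := Real.cos_arccos hB1' hB2
    have hsin : Real.sin (Real.arccos (B/r)) = |A| / r := by
      rw [Real.sin_arccos]
      have h1 : 1 - (B/r)^2 = A^2 / r^2 := by field_simp; nlinarith
      rw [h1, Real.sqrt_div (sq_nonneg A), Real.sqrt_sq_eq_abs,
        Real.sqrt_sq hrpos.le]
    rcases le_or_gt 0 A with hA | hA
    · refine ⟨Real.arccos (B/r), ?_, ?_⟩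
      · rw [hsin, abs_of_nonneg hA]; field_simp
      · rw [hcos]; field_simp
    · refine ⟨-Real.arccos (B/r), ?_, ?_⟩
      · rw [Real.sin_neg, hsin, abs_of_neg hA]; field_simp
      · rw [Real.cos_neg, hcos]; field_simp

/-- (Equilateral relative equilibrium on a rotating meridian.)
For any positive masses `m₁, m₂, m₃` and any real `u` (the value of `U′(−1/2)`),
there exist angles with `θ₁ − θ₂ = θ₂ − θ₃ = 2π/3` and `ω ∈ ℝ` satisfying the
equations of motion `(ω²/2) mₖ sin(2θₖ) = ∑_{j≠k} mₖ mⱼ sin(θₖ − θⱼ) u`. -/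
theorem stmt10 (m1 m2 m3 : ℝ) (hm1 : 0 < m1) (hm2 : 0 < m2) (hm3 : 0 < m3) (u : ℝ) :
    ∃ θ1 θ2 θ3 ω : ℝ,
      θ1 - θ2 = 2 * Real.pi / 3 ∧ θ2 - θ3 = 2 * Real.pi / 3 ∧
      (ω ^ 2 / 2) * m1 * Real.sin (2 * θ1)
        = m1 * m2 * Real.sin (θ1 - θ2) * u + m1 * m3 * Real.sin (θ1 - θ3) * u ∧
      (ω ^ 2 / 2) * m2 * Real.sin (2 * θ2)
        = m2 * m1 * Real.sin (θ2 - θ1) * u + m2 * m3 * Real.sin (θ2 - θ3) * u ∧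
      (ω ^ 2 / 2) * m3 * Real.sin (2 * θ3)
        = m3 * m1 * Real.sin (θ3 - θ1) * u + m3 * m2 * Real.sin (θ3 - θ2) * u := by
  obtain ⟨φ, hs, hc⟩ := exists_phi (Real.sqrt 3 * u / 2 * (m3 - m1))
      (u / 2 * (m1 - 2*m2 + m3))
  set r := Real.sqrt ((Real.sqrt 3 * u / 2 * (m3 - m1))^2 + (u / 2 * (m1 - 2*m2 + m3))^2)
    with hrdef
  have hrnn : 0 ≤ r := Real.sqrt_nonneg _
  have hω : (Real.sqrt (2*r))^2 = 2*r := Real.sq_sqrt (by linarith)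
  have hs23 : Real.sin (2*π/3) = Real.sqrt 3 / 2 := by
    rw [show (2*π/3 : ℝ) = π - π/3 by ring, Real.sin_pi_sub, Real.sin_pi_div_three]
  have hs43 : Real.sin (4*π/3) = -(Real.sqrt 3 / 2) := by
    rw [show (4*π/3 : ℝ) = π + π/3 by ring, Real.sin_add, Real.sin_pi, Real.cos_pi,
      Real.sin_pi_div_three]; ring
  have hc43 : Real.cos (4*π/3) = -(1/2) := by
    rw [show (4*π/3 : ℝ) = π + π/3 by ring, Real.cos_add, Real.sin_pi, Real.cos_pi,
      Real.cos_pi_div_three]; ring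
  refine ⟨φ/2 + 2*π/3, φ/2, φ/2 - 2*π/3, Real.sqrt (2*r), by ring, by ring, ?_, ?_, ?_⟩
  · rw [hω,
      show (2*(φ/2 + 2*π/3) : ℝ) = φ + 4*π/3 by ring,
      show ((φ/2 + 2*π/3) - φ/2 : ℝ) = 2*π/3 by ring,
      show ((φ/2 + 2*π/3) - (φ/2 - 2*π/3) : ℝ) = 4*π/3 by ring,
      Real.sin_add, hs43, hc43, hs23]
    linear_combination (-(m1/2)) * hs + (-(Real.sqrt 3 * m1/2)) * hc
  · rw [hω,
      show (2*(φ/2) : ℝ) = φ by ring,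
      show ((φ/2) - (φ/2 + 2*π/3) : ℝ) = -(2*π/3) by ring,
      show ((φ/2) - (φ/2 - 2*π/3) : ℝ) = 2*π/3 by ring,
      Real.sin_neg, hs23]
    linear_combination m2 * hs
  · rw [hω,
      show (2*(φ/2 - 2*π/3) : ℝ) = φ - 4*π/3 by ring,
      show ((φ/2 - 2*π/3) - (φ/2 + 2*π/3) : ℝ) = -(4*π/3) by ring,
      show ((φ/2 - 2*π/3) - (φ/2) : ℝ) = -(2*π/3) by ring,
      Real.sin_sub, Real.sin_neg, Real.sin_neg, hs43, hc43, hs23]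
    linear_combination (-(m3/2)) * hs + (Real.sqrt 3 * m3/2) * hc
end

section
/- (Attractive–repulsive duality for Euler relative equilibria.) Let U′ : ℝ → ℝ and suppose θ₁, θ₂, θ₃ ∈ ℝ and ω ∈ ℝ satisfy (ω²/2) m_k sin(2θ_k) = ∑_{j≠k} m_k m_j sin(θ_k − θ_j) U′(cos(θ_k − θ_j)) for k = 1,2,3. Then the shifted angles θ̃_k := θ_k + π/2 together with the same ω satisfy the corresponding equations with U′ replaced by −U′: (ω²/2) m_k sin(2θ̃_k) = ∑_{j≠k} m_k m_j sin(θ̃_k − θ̃_j) (−U′)(cos(θ̃_k − θ̃_j)) for k = 1,2,3. -/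
open Real

/-- (Attractive–repulsive duality for Euler relative equilibria.)
If `θ₁, θ₂, θ₃, ω` satisfy the meridian equations of motion for the potential
derivative `U′`, then the shifted angles `θₖ + π/2` with the same `ω` satisfy them
for `−U′`. -/
theorem stmt11 (m1 m2 m3 : ℝ) (hm1 : 0 < m1) (hm2 : 0 < m2) (hm3 : 0 < m3)
    (U' : ℝ → ℝ) (θ1 θ2 θ3 ω : ℝ)
    (h1 : (ω ^ 2 / 2) * m1 * Real.sin (2 * θ1)
      = m1 * m2 * Real.sin (θ1 - θ2) * U' (Real.cos (θ1 - θ2))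
        + m1 * m3 * Real.sin (θ1 - θ3) * U' (Real.cos (θ1 - θ3)))
    (h2 : (ω ^ 2 / 2) * m2 * Real.sin (2 * θ2)
      = m2 * m1 * Real.sin (θ2 - θ1) * U' (Real.cos (θ2 - θ1))
        + m2 * m3 * Real.sin (θ2 - θ3) * U' (Real.cos (θ2 - θ3)))
    (h3 : (ω ^ 2 / 2) * m3 * Real.sin (2 * θ3)
      = m3 * m1 * Real.sin (θ3 - θ1) * U' (Real.cos (θ3 - θ1))
        + m3 * m2 * Real.sin (θ3 - θ2) * U' (Real.cos (θ3 - θ2))) :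
    (ω ^ 2 / 2) * m1 * Real.sin (2 * (θ1 + Real.pi / 2))
      = m1 * m2 * Real.sin ((θ1 + Real.pi / 2) - (θ2 + Real.pi / 2))
          * (-(U' (Real.cos ((θ1 + Real.pi / 2) - (θ2 + Real.pi / 2)))))
        + m1 * m3 * Real.sin ((θ1 + Real.pi / 2) - (θ3 + Real.pi / 2))
          * (-(U' (Real.cos ((θ1 + Real.pi / 2) - (θ3 + Real.pi / 2))))) ∧
    (ω ^ 2 / 2) * m2 * Real.sin (2 * (θ2 + Real.pi / 2))
      = m2 * m1 * Real.sin ((θ2 + Real.pi / 2) - (θ1 + Real.pi / 2))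
          * (-(U' (Real.cos ((θ2 + Real.pi / 2) - (θ1 + Real.pi / 2)))))
        + m2 * m3 * Real.sin ((θ2 + Real.pi / 2) - (θ3 + Real.pi / 2))
          * (-(U' (Real.cos ((θ2 + Real.pi / 2) - (θ3 + Real.pi / 2))))) ∧
    (ω ^ 2 / 2) * m3 * Real.sin (2 * (θ3 + Real.pi / 2))
      = m3 * m1 * Real.sin ((θ3 + Real.pi / 2) - (θ1 + Real.pi / 2))
          * (-(U' (Real.cos ((θ3 + Real.pi / 2) - (θ1 + Real.pi / 2)))))
        + m3 * m2 * Real.sin ((θ3 + Real.pi / 2) - (θ2 + Real.pi / 2))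
          * (-(U' (Real.cos ((θ3 + Real.pi / 2) - (θ2 + Real.pi / 2))))) := by
  have e : ∀ θ : ℝ, 2 * (θ + Real.pi / 2) = 2 * θ + Real.pi := by intro θ; ring
  have d : ∀ a b : ℝ, (a + Real.pi / 2) - (b + Real.pi / 2) = a - b := by intro a b; ring
  refine ⟨?_, ?_, ?_⟩ <;> simp only [e, d, Real.sin_add_pi] <;> linarith
end

section
/- (Necessary conditions for a Lagrange relative equilibrium.) Assume: (i) the three real numbers u₁₂, u₂₃, u₃₁ all have the same strict sign (all positive or all negative); (ii) the equations (P) hold; (iii) the principal-axis condition (A) holds; and (iv) the vectors q₁, q₂, q₃ are linearly independent (the configuration is not contained in a plane through the origin, i.e. it is non-collinear). Then sin(φ_i − φ_j) ≠ 0 for every pair i ≠ j, the chain u₁₂ cos θ₃ = u₂₃ cos θ₁ = u₃₁ cos θ₂ holds with common value different from 0, and cos θ₁, cos θ₂, cos θ₃ all have the same strict sign (all three bodies lie in one open hemisphere determined by the rotation axis). -/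
open Real

/-- (Necessary conditions for a Lagrange relative equilibrium.)
If the `u_ij` all have the same strict sign, the equations (P) hold, the
principal-axis condition (A) holds, and the configuration is non-collinear
(the position vectors are linearly independent), then `sin(φᵢ − φⱼ) ≠ 0` for all
`i ≠ j`, the chain `u₁₂ cos θ₃ = u₂₃ cos θ₁ = u₃₁ cos θ₂` holds with common value
`≠ 0`, and `cos θ₁, cos θ₂, cos θ₃` all have the same strict sign. -/
theorem stmt12 (m1 m2 m3 : ℝ) (hm1 : 0 < m1) (hm2 : 0 < m2) (hm3 : 0 < m3)
    (θ1 θ2 θ3 : ℝ) (hθ1 : θ1 ∈ Set.Ioo 0 Real.pi) (hθ2 : θ2 ∈ Set.Ioo 0 Real.pi)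
    (hθ3 : θ3 ∈ Set.Ioo 0 Real.pi) (φ1 φ2 φ3 : ℝ)
    (u12 u23 u31 : ℝ)
    -- (i) the uᵢⱼ all have the same strict sign
    (husign : (0 < u12 ∧ 0 < u23 ∧ 0 < u31) ∨ (u12 < 0 ∧ u23 < 0 ∧ u31 < 0))
    -- (ii) the equations (P)
    (hP1 : m1 * m2 * u12 * Real.sin θ1 * Real.sin θ2 * Real.sin (φ1 - φ2)
         = m2 * m3 * u23 * Real.sin θ2 * Real.sin θ3 * Real.sin (φ2 - φ3))
    (hP2 : m2 * m3 * u23 * Real.sin θ2 * Real.sin θ3 * Real.sin (φ2 - φ3)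
         = m3 * m1 * u31 * Real.sin θ3 * Real.sin θ1 * Real.sin (φ3 - φ1))
    -- (iii) the principal-axis condition (A)
    (hA : ∀ φk ∈ ({φ1, φ2, φ3} : Set ℝ),
      m1 * Real.sin θ1 * Real.cos θ1 * Real.cos (φk - φ1)
        + m2 * Real.sin θ2 * Real.cos θ2 * Real.cos (φk - φ2)
        + m3 * Real.sin θ3 * Real.cos θ3 * Real.cos (φk - φ3) = 0 ∧
      m1 * Real.sin θ1 * Real.cos θ1 * Real.sin (φk - φ1)
        + m2 * Real.sin θ2 * Real.cos θ2 * Real.sin (φk - φ2)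
        + m3 * Real.sin θ3 * Real.cos θ3 * Real.sin (φk - φ3) = 0)
    -- (iv) the configuration is non-collinear
    (hind : LinearIndependent ℝ
      ![![Real.sin θ1 * Real.cos φ1, Real.sin θ1 * Real.sin φ1, Real.cos θ1],
        ![Real.sin θ2 * Real.cos φ2, Real.sin θ2 * Real.sin φ2, Real.cos θ2],
        ![Real.sin θ3 * Real.cos φ3, Real.sin θ3 * Real.sin φ3, Real.cos θ3]]) :
    (Real.sin (φ1 - φ2) ≠ 0 ∧ Real.sin (φ2 - φ3) ≠ 0 ∧ Real.sin (φ3 - φ1) ≠ 0) ∧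
    (u12 * Real.cos θ3 = u23 * Real.cos θ1 ∧ u23 * Real.cos θ1 = u31 * Real.cos θ2 ∧
      u12 * Real.cos θ3 ≠ 0) ∧
    ((0 < Real.cos θ1 ∧ 0 < Real.cos θ2 ∧ 0 < Real.cos θ3) ∨
      (Real.cos θ1 < 0 ∧ Real.cos θ2 < 0 ∧ Real.cos θ3 < 0)) := by
  have hs1 : 0 < Real.sin θ1 := Real.sin_pos_of_pos_of_lt_pi hθ1.1 hθ1.2
  have hs2 : 0 < Real.sin θ2 := Real.sin_pos_of_pos_of_lt_pi hθ2.1 hθ2.2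
  have hs3 : 0 < Real.sin θ3 := Real.sin_pos_of_pos_of_lt_pi hθ3.1 hθ3.2
  have hu12 : u12 ≠ 0 := by rcases husign with h | h; exacts [h.1.ne', h.1.ne]
  have hu23 : u23 ≠ 0 := by rcases husign with h | h; exacts [h.2.1.ne', h.2.1.ne]
  have hu31 : u31 ≠ 0 := by rcases husign with h | h; exacts [h.2.2.ne', h.2.2.ne]
  -- the determinant of the configuration matrix is nonzero
  have hdet : Real.sin θ1 * Real.sin θ2 * Real.cos θ3 * Real.sin (φ1 - φ2)
      + Real.sin θ1 * Real.cos θ2 * Real.sin θ3 * Real.sin (φ3 - φ1)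
      + Real.cos θ1 * Real.sin θ2 * Real.sin θ3 * Real.sin (φ2 - φ3) ≠ 0 := by
    have h1 : IsUnit (Matrix.of
        ![![Real.sin θ1 * Real.cos φ1, Real.sin θ1 * Real.sin φ1, Real.cos θ1],
          ![Real.sin θ2 * Real.cos φ2, Real.sin θ2 * Real.sin φ2, Real.cos θ2],
          ![Real.sin θ3 * Real.cos φ3, Real.sin θ3 * Real.sin φ3, Real.cos θ3]]) := by
      rw [← Matrix.linearIndependent_rows_iff_isUnit]
      exact hind
    have h3 := ((Matrix.isUnit_iff_isUnit_det _).mp h1).ne_zero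
    intro h
    apply h3
    rw [Real.sin_sub, Real.sin_sub, Real.sin_sub] at h
    simp only [Matrix.det_fin_three, Matrix.of_apply, Matrix.cons_val', Matrix.cons_val_zero,
      Matrix.cons_val_one, Matrix.head_cons, Matrix.empty_val', Matrix.cons_val_fin_one,
      Matrix.head_fin_const, Matrix.cons_val_two, Matrix.tail_cons]
    nlinarith [h]
  -- principal axis relations
  have hA1 := (hA φ1 (by simp)).2
  have hA2 := (hA φ2 (by simp)).2
  have hA3 := (hA φ3 (by simp)).2
  rw [Real.sin_sub, Real.sin_sub, Real.sin_sub] at hA1 hA2 hA3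
  have hR1 : m2 * Real.sin θ2 * Real.cos θ2 * Real.sin (φ1 - φ2)
      = m3 * Real.sin θ3 * Real.cos θ3 * Real.sin (φ3 - φ1) := by
    rw [Real.sin_sub, Real.sin_sub]; linear_combination hA1
  have hR2 : m3 * Real.sin θ3 * Real.cos θ3 * Real.sin (φ2 - φ3)
      = m1 * Real.sin θ1 * Real.cos θ1 * Real.sin (φ1 - φ2) := by
    rw [Real.sin_sub, Real.sin_sub]; linear_combination hA2
  have hR3 : m1 * Real.sin θ1 * Real.cos θ1 * Real.sin (φ3 - φ1)
      = m2 * Real.sin θ2 * Real.cos θ2 * Real.sin (φ2 - φ3) := by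
    rw [Real.sin_sub, Real.sin_sub]; linear_combination hA3
  -- nonvanishing coefficients
  have hA12ne : m1 * m2 * u12 * Real.sin θ1 * Real.sin θ2 ≠ 0 :=
    mul_ne_zero (mul_ne_zero (mul_ne_zero (mul_ne_zero hm1.ne' hm2.ne') hu12) hs1.ne') hs2.ne'
  have hA23ne : m2 * m3 * u23 * Real.sin θ2 * Real.sin θ3 ≠ 0 :=
    mul_ne_zero (mul_ne_zero (mul_ne_zero (mul_ne_zero hm2.ne' hm3.ne') hu23) hs2.ne') hs3.ne'
  have hA31ne : m3 * m1 * u31 * Real.sin θ3 * Real.sin θ1 ≠ 0 :=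
    mul_ne_zero (mul_ne_zero (mul_ne_zero (mul_ne_zero hm3.ne' hm1.ne') hu31) hs3.ne') hs1.ne'
  -- part 1 : the sines of the angle differences are nonzero
  have hS12 : Real.sin (φ1 - φ2) ≠ 0 := by
    intro h12
    have h23 : Real.sin (φ2 - φ3) = 0 := by
      have h := hP1
      rw [h12, mul_zero] at h
      exact (mul_eq_zero.mp h.symm).resolve_left hA23ne
    have h31 : Real.sin (φ3 - φ1) = 0 := by
      have h := hP2
      rw [h23, mul_zero] at h
      exact (mul_eq_zero.mp h.symm).resolve_left hA31ne
    exact hdet (by rw [h12, h23, h31]; ring)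
  have hS23 : Real.sin (φ2 - φ3) ≠ 0 := by
    intro h23
    have h12 : Real.sin (φ1 - φ2) = 0 := by
      have h := hP1
      rw [h23, mul_zero] at h
      exact (mul_eq_zero.mp h).resolve_left hA12ne
    exact hS12 h12
  have hS31 : Real.sin (φ3 - φ1) ≠ 0 := by
    intro h31
    have h23 : Real.sin (φ2 - φ3) = 0 := by
      have h := hP2
      rw [h31, mul_zero] at h
      exact (mul_eq_zero.mp h).resolve_left hA23ne
    exact hS23 h23
  have hΓ1 : m1 * m2 * u12 * Real.sin θ1 * Real.sin θ2 * Real.sin (φ1 - φ2) ≠ 0 :=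
    mul_ne_zero hA12ne hS12
  have hΓ2 : m2 * m3 * u23 * Real.sin θ2 * Real.sin θ3 * Real.sin (φ2 - φ3) ≠ 0 :=
    mul_ne_zero hA23ne hS23
  -- the chain
  have e1 : u12 * Real.cos θ3 = u23 * Real.cos θ1 := by
    have hmul : u12 * Real.cos θ3
          * (m2 * m3 * u23 * Real.sin θ2 * Real.sin θ3 * Real.sin (φ2 - φ3))
        = u23 * Real.cos θ1
          * (m1 * m2 * u12 * Real.sin θ1 * Real.sin θ2 * Real.sin (φ1 - φ2)) := by
      linear_combination (u12 * u23 * m2 * Real.sin θ2) * hR2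
    rw [← hP1] at hmul
    exact mul_right_cancel₀ hΓ1 hmul
  have e2 : u23 * Real.cos θ1 = u31 * Real.cos θ2 := by
    have hmul : u23 * Real.cos θ1
          * (m3 * m1 * u31 * Real.sin θ3 * Real.sin θ1 * Real.sin (φ3 - φ1))
        = u31 * Real.cos θ2
          * (m2 * m3 * u23 * Real.sin θ2 * Real.sin θ3 * Real.sin (φ2 - φ3)) := by
      linear_combination (u23 * u31 * m3 * Real.sin θ3) * hR3
    rw [← hP2] at hmul
    exact mul_right_cancel₀ hΓ2 hmul
  -- the common value is nonzero
  have hne : u12 * Real.cos θ3 ≠ 0 := by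
    intro h0
    have hc3 : Real.cos θ3 = 0 := (mul_eq_zero.mp h0).resolve_left hu12
    have hc1 : Real.cos θ1 = 0 := by
      have : u23 * Real.cos θ1 = 0 := e1 ▸ h0
      exact (mul_eq_zero.mp this).resolve_left hu23
    have hc2 : Real.cos θ2 = 0 := by
      have : u31 * Real.cos θ2 = 0 := e2 ▸ (e1 ▸ h0)
      exact (mul_eq_zero.mp this).resolve_left hu31
    exact hdet (by rw [hc1, hc2, hc3]; ring)
  -- the cosines are nonzero
  have hc3ne : Real.cos θ3 ≠ 0 := fun h => hne (by rw [h, mul_zero])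
  have hc1ne : Real.cos θ1 ≠ 0 := fun h => hne (e1.trans (by rw [h, mul_zero]))
  have hc2ne : Real.cos θ2 ≠ 0 := fun h =>
    hne ((e1.trans e2).trans (by rw [h, mul_zero]))
  -- same sign
  have hu1223 : 0 < u12 * u23 := by
    rcases husign with ⟨a, b, _⟩ | ⟨a, b, _⟩
    exacts [mul_pos a b, mul_pos_of_neg_of_neg a b]
  have hu2331 : 0 < u23 * u31 := by
    rcases husign with ⟨_, b, c⟩ | ⟨_, b, c⟩
    exacts [mul_pos b c, mul_pos_of_neg_of_neg b c]
  have h13 : 0 < Real.cos θ1 * Real.cos θ3 := by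
    have h := mul_pos hu1223 (mul_self_pos.mpr hc1ne)
    have heq : u12 * u23 * (Real.cos θ1 * Real.cos θ1)
        = u12 * u12 * (Real.cos θ1 * Real.cos θ3) := by
      linear_combination (u12 * Real.cos θ1) * e1.symm
    rw [heq] at h
    nlinarith [h, mul_self_nonneg u12]
  have h12 : 0 < Real.cos θ1 * Real.cos θ2 := by
    have h := mul_pos hu2331 (mul_self_pos.mpr hc1ne)
    have heq : u23 * u31 * (Real.cos θ1 * Real.cos θ1)
        = u31 * u31 * (Real.cos θ1 * Real.cos θ2) := by
      linear_combination (u31 * Real.cos θ1) * e2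
    rw [heq] at h
    nlinarith [h, mul_self_nonneg u31]
  refine ⟨⟨hS12, hS23, hS31⟩, ⟨e1, e2, hne⟩, ?_⟩
  rcases mul_pos_iff.mp h12 with ⟨ha, hb⟩ | ⟨ha, hb⟩
  · rcases mul_pos_iff.mp h13 with ⟨_, hc⟩ | ⟨hc, _⟩
    · exact Or.inl ⟨ha, hb, hc⟩
    · exact absurd ha (not_lt.mpr hc.le)
  · rcases mul_pos_iff.mp h13 with ⟨hc, _⟩ | ⟨_, hc⟩
    · exact absurd hc (not_lt.mpr ha.le)
    · exact Or.inr ⟨ha, hb, hc⟩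
end

section
/- (The Lagrange relations.) Assume: (i) cos θ_k ≠ 0 for k = 1,2,3; (ii) the chain u₁₂ cos θ₃ = u₂₃ cos θ₁ = u₃₁ cos θ₂ holds with common value different from 0; (iii) the principal-axis condition (A) holds; and (iv) the equations (T_i) hold for i = 1,2,3 with angular speed ω. Then u₁₂/(cos θ₁ cos θ₂) = u₂₃/(cos θ₂ cos θ₃) = u₃₁/(cos θ₃ cos θ₁) = ω²/(∑_{k=1}^{3} m_k cos² θ_k). -/
open Real

/-- (The Lagrange relations.) If `cos θₖ ≠ 0`, the chain
`u₁₂ cos θ₃ = u₂₃ cos θ₁ = u₃₁ cos θ₂` holds with common value `≠ 0`, the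
principal-axis condition (A) holds, and the equations of motion (Tᵢ) hold with
angular speed `ω`, then
`u₁₂/(cos θ₁ cos θ₂) = u₂₃/(cos θ₂ cos θ₃) = u₃₁/(cos θ₃ cos θ₁) = ω²/(∑ mₖ cos² θₖ)`. -/
theorem stmt13 (m1 m2 m3 : ℝ) (hm1 : 0 < m1) (hm2 : 0 < m2) (hm3 : 0 < m3)
    (θ1 θ2 θ3 : ℝ) (hθ1 : θ1 ∈ Set.Ioo 0 Real.pi) (hθ2 : θ2 ∈ Set.Ioo 0 Real.pi)
    (hθ3 : θ3 ∈ Set.Ioo 0 Real.pi) (φ1 φ2 φ3 : ℝ) (u12 u23 u31 ω : ℝ)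
    -- (i) cos θₖ ≠ 0
    (hc1 : Real.cos θ1 ≠ 0) (hc2 : Real.cos θ2 ≠ 0) (hc3 : Real.cos θ3 ≠ 0)
    -- (ii) the chain with nonzero common value
    (hch1 : u12 * Real.cos θ3 = u23 * Real.cos θ1)
    (hch2 : u23 * Real.cos θ1 = u31 * Real.cos θ2)
    (hch0 : u12 * Real.cos θ3 ≠ 0)
    -- (iii) the principal-axis condition (A)
    (hA : ∀ φk ∈ ({φ1, φ2, φ3} : Set ℝ),
      m1 * Real.sin θ1 * Real.cos θ1 * Real.cos (φk - φ1)
        + m2 * Real.sin θ2 * Real.cos θ2 * Real.cos (φk - φ2)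
        + m3 * Real.sin θ3 * Real.cos θ3 * Real.cos (φk - φ3) = 0 ∧
      m1 * Real.sin θ1 * Real.cos θ1 * Real.sin (φk - φ1)
        + m2 * Real.sin θ2 * Real.cos θ2 * Real.sin (φk - φ2)
        + m3 * Real.sin θ3 * Real.cos θ3 * Real.sin (φk - φ3) = 0)
    -- (iv) the equations of motion (Tᵢ)
    (hT1 : ω ^ 2 * m1 * Real.sin θ1 * Real.cos θ1
      = m1 * m2 * u12 * (Real.sin θ1 * Real.cos θ2
          - Real.cos θ1 * Real.sin θ2 * Real.cos (φ1 - φ2))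
        + m1 * m3 * u31 * (Real.sin θ1 * Real.cos θ3
          - Real.cos θ1 * Real.sin θ3 * Real.cos (φ1 - φ3)))
    (hT2 : ω ^ 2 * m2 * Real.sin θ2 * Real.cos θ2
      = m2 * m1 * u12 * (Real.sin θ2 * Real.cos θ1
          - Real.cos θ2 * Real.sin θ1 * Real.cos (φ2 - φ1))
        + m2 * m3 * u23 * (Real.sin θ2 * Real.cos θ3
          - Real.cos θ2 * Real.sin θ3 * Real.cos (φ2 - φ3)))
    (hT3 : ω ^ 2 * m3 * Real.sin θ3 * Real.cos θ3
      = m3 * m1 * u31 * (Real.sin θ3 * Real.cos θ1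
          - Real.cos θ3 * Real.sin θ1 * Real.cos (φ3 - φ1))
        + m3 * m2 * u23 * (Real.sin θ3 * Real.cos θ2
          - Real.cos θ3 * Real.sin θ2 * Real.cos (φ3 - φ2))) :
    u12 / (Real.cos θ1 * Real.cos θ2) = u23 / (Real.cos θ2 * Real.cos θ3) ∧
    u23 / (Real.cos θ2 * Real.cos θ3) = u31 / (Real.cos θ3 * Real.cos θ1) ∧
    u31 / (Real.cos θ3 * Real.cos θ1)
      = ω ^ 2 / (m1 * Real.cos θ1 ^ 2 + m2 * Real.cos θ2 ^ 2 + m3 * Real.cos θ3 ^ 2) := by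
  have hs1 : Real.sin θ1 ≠ 0 := ne_of_gt (Real.sin_pos_of_pos_of_lt_pi hθ1.1 hθ1.2)
  have hch12 : u12 * Real.cos θ3 = u31 * Real.cos θ2 := hch1.trans hch2
  have hAcos := (hA φ1 (by simp)).1
  rw [sub_self, Real.cos_zero] at hAcos
  set c1 := Real.cos θ1; set c2 := Real.cos θ2; set c3 := Real.cos θ3
  set M := m1 * c1 ^ 2 + m2 * c2 ^ 2 + m3 * c3 ^ 2 with hM
  have hMpos : 0 < M := by positivity
  have hkey : ω ^ 2 * m1 * Real.sin θ1 * (c1 * c2 * c3)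
      = m1 * Real.sin θ1 * (u31 * c2) * M := by
    linear_combination (c2 * c3) * hT1
      + m1 * m2 * c2 * (Real.sin θ1 * c2 - c1 * Real.sin θ2 * Real.cos (φ1 - φ2)) * hch12
      - m1 * c1 * c2 * u31 * hAcos
  have hkey2 : ω ^ 2 * (c1 * c2 * c3) = u31 * c2 * M := by
    have hms : m1 * Real.sin θ1 ≠ 0 := mul_ne_zero (ne_of_gt hm1) hs1
    apply mul_left_cancel₀ hms
    linear_combination hkey
  refine ⟨?_, ?_, ?_⟩
  · field_simp
    linear_combination hch1
  · field_simp
    linear_combination hch2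
  · rw [div_eq_div_iff (mul_ne_zero hc3 hc1) (ne_of_gt hMpos)]
    apply mul_left_cancel₀ hc2
    linear_combination -hkey2
end

section
/- (Sufficiency of the Lagrange relations.) Assume: (i) cos θ_k ≠ 0 for k = 1,2,3; (ii) the principal-axis condition (A) holds; and (iii) u_ij = ω² cos θ_i cos θ_j / (∑_{k=1}^{3} m_k cos² θ_k) for each pair (i,j) ∈ {(1,2),(2,3),(3,1)}. Then the equations of motion (T_i) for i = 1,2,3 and the equations (P) are satisfied, so the configuration is a relative equilibrium rotating about the z-axis with angular speed ω. -/
open Real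

/-- (Sufficiency of the Lagrange relations.) If `cos θₖ ≠ 0`, the
principal-axis condition (A) holds, and
`u_ij = ω² cos θᵢ cos θⱼ / (∑ mₖ cos² θₖ)` for the three pairs, then the equations of
motion (Tᵢ) and the equations (P) are satisfied. -/
theorem stmt14 (m1 m2 m3 : ℝ) (hm1 : 0 < m1) (hm2 : 0 < m2) (hm3 : 0 < m3)
    (θ1 θ2 θ3 : ℝ) (hθ1 : θ1 ∈ Set.Ioo 0 Real.pi) (hθ2 : θ2 ∈ Set.Ioo 0 Real.pi)
    (hθ3 : θ3 ∈ Set.Ioo 0 Real.pi) (φ1 φ2 φ3 : ℝ) (u12 u23 u31 ω : ℝ)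
    -- (i) cos θₖ ≠ 0
    (hc1 : Real.cos θ1 ≠ 0) (hc2 : Real.cos θ2 ≠ 0) (hc3 : Real.cos θ3 ≠ 0)
    -- (ii) the principal-axis condition (A)
    (hA : ∀ φk ∈ ({φ1, φ2, φ3} : Set ℝ),
      m1 * Real.sin θ1 * Real.cos θ1 * Real.cos (φk - φ1)
        + m2 * Real.sin θ2 * Real.cos θ2 * Real.cos (φk - φ2)
        + m3 * Real.sin θ3 * Real.cos θ3 * Real.cos (φk - φ3) = 0 ∧
      m1 * Real.sin θ1 * Real.cos θ1 * Real.sin (φk - φ1)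
        + m2 * Real.sin θ2 * Real.cos θ2 * Real.sin (φk - φ2)
        + m3 * Real.sin θ3 * Real.cos θ3 * Real.sin (φk - φ3) = 0)
    -- (iii) the Lagrange relations
    (hu12 : u12 = ω ^ 2 * Real.cos θ1 * Real.cos θ2
      / (m1 * Real.cos θ1 ^ 2 + m2 * Real.cos θ2 ^ 2 + m3 * Real.cos θ3 ^ 2))
    (hu23 : u23 = ω ^ 2 * Real.cos θ2 * Real.cos θ3
      / (m1 * Real.cos θ1 ^ 2 + m2 * Real.cos θ2 ^ 2 + m3 * Real.cos θ3 ^ 2))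
    (hu31 : u31 = ω ^ 2 * Real.cos θ3 * Real.cos θ1
      / (m1 * Real.cos θ1 ^ 2 + m2 * Real.cos θ2 ^ 2 + m3 * Real.cos θ3 ^ 2)) :
    -- the equations of motion (Tᵢ)
    (ω ^ 2 * m1 * Real.sin θ1 * Real.cos θ1
      = m1 * m2 * u12 * (Real.sin θ1 * Real.cos θ2
          - Real.cos θ1 * Real.sin θ2 * Real.cos (φ1 - φ2))
        + m1 * m3 * u31 * (Real.sin θ1 * Real.cos θ3
          - Real.cos θ1 * Real.sin θ3 * Real.cos (φ1 - φ3))) ∧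
    (ω ^ 2 * m2 * Real.sin θ2 * Real.cos θ2
      = m2 * m1 * u12 * (Real.sin θ2 * Real.cos θ1
          - Real.cos θ2 * Real.sin θ1 * Real.cos (φ2 - φ1))
        + m2 * m3 * u23 * (Real.sin θ2 * Real.cos θ3
          - Real.cos θ2 * Real.sin θ3 * Real.cos (φ2 - φ3))) ∧
    (ω ^ 2 * m3 * Real.sin θ3 * Real.cos θ3
      = m3 * m1 * u31 * (Real.sin θ3 * Real.cos θ1
          - Real.cos θ3 * Real.sin θ1 * Real.cos (φ3 - φ1))
        + m3 * m2 * u23 * (Real.sin θ3 * Real.cos θ2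
          - Real.cos θ3 * Real.sin θ2 * Real.cos (φ3 - φ2))) ∧
    -- the equations (P)
    (m1 * m2 * u12 * Real.sin θ1 * Real.sin θ2 * Real.sin (φ1 - φ2)
      = m2 * m3 * u23 * Real.sin θ2 * Real.sin θ3 * Real.sin (φ2 - φ3)) ∧
    (m2 * m3 * u23 * Real.sin θ2 * Real.sin θ3 * Real.sin (φ2 - φ3)
      = m3 * m1 * u31 * Real.sin θ3 * Real.sin θ1 * Real.sin (φ3 - φ1)) := by
  obtain ⟨hA1c, hA1s⟩ := hA φ1 (by simp)
  obtain ⟨hA2c, hA2s⟩ := hA φ2 (by simp)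
  obtain ⟨hA3c, hA3s⟩ := hA φ3 (by simp)
  simp only [sub_self, Real.cos_zero, Real.sin_zero, mul_one, mul_zero, add_zero, zero_add] at hA1c hA1s hA2c hA2s hA3c hA3s
  have hS : m1 * Real.cos θ1 ^ 2 + m2 * Real.cos θ2 ^ 2 + m3 * Real.cos θ3 ^ 2 ≠ 0 := by
    positivity
  subst hu12 hu23 hu31
  simp only [Real.sin_sub, Real.cos_sub] at *
  refine ⟨?_, ?_, ?_, ?_, ?_⟩
  · linear_combination (norm := skip) ((ω^2*m1*Real.cos θ1^2) / (m1 * Real.cos θ1 ^ 2 + m2 * Real.cos θ2 ^ 2 + m3 * Real.cos θ3 ^ 2)) * hA1c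
    field_simp
    ring
  · linear_combination (norm := skip) ((ω^2*m2*Real.cos θ2^2) / (m1 * Real.cos θ1 ^ 2 + m2 * Real.cos θ2 ^ 2 + m3 * Real.cos θ3 ^ 2)) * hA2c
    field_simp
    ring
  · linear_combination (norm := skip) ((ω^2*m3*Real.cos θ3^2) / (m1 * Real.cos θ1 ^ 2 + m2 * Real.cos θ2 ^ 2 + m3 * Real.cos θ3 ^ 2)) * hA3c
    field_simp
    ring
  · linear_combination (norm := skip) ((-(ω^2*m2*Real.cos θ2*Real.sin θ2)) / (m1 * Real.cos θ1 ^ 2 + m2 * Real.cos θ2 ^ 2 + m3 * Real.cos θ3 ^ 2)) * hA2s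
    field_simp
    ring
  · linear_combination (norm := skip) ((-(ω^2*m3*Real.cos θ3*Real.sin θ3)) / (m1 * Real.cos θ1 ^ 2 + m2 * Real.cos θ2 ^ 2 + m3 * Real.cos θ3 ^ 2)) * hA3s
    field_simp
    ring
end

section
/- (The eigenvector associated with a Lagrange relative equilibrium.) Let u₁₂, u₂₃, u₃₁ be nonzero reals, let e ∈ ℝ³ be a unit vector with I e = λ e, write cos θ_k := (q_k · e), and suppose there is δ ≠ 0 with u₂₃ cos θ₁ = u₃₁ cos θ₂ = u₁₂ cos θ₃ = δ. Then the vector w := (√(m₁)/u₂₃, √(m₂)/u₃₁, √(m₃)/u₁₂)ᵀ satisfies J w = λ w; i.e. w is an eigenvector of J with the same eigenvalue λ. -/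
open Matrix BigOperators

/-- (The eigenvector associated with a Lagrange relative equilibrium.)
If `e` is a unit eigenvector of the inertia tensor `I` with eigenvalue `λ`,
`cos θₖ := qₖ · e`, and `u₂₃ cos θ₁ = u₃₁ cos θ₂ = u₁₂ cos θ₃ = δ ≠ 0`, then
`w = (√m₁/u₂₃, √m₂/u₃₁, √m₃/u₁₂)ᵀ` satisfies `J w = λ w`. -/
theorem stmt15 (m : Fin 3 → ℝ) (hm : ∀ i, 0 < m i)
    (q : Fin 3 → Fin 3 → ℝ) (hq : ∀ i, q i ⬝ᵥ q i = 1)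
    (M : ℝ) (hM : M = ∑ i, m i)
    (I : Matrix (Fin 3) (Fin 3) ℝ)
    (hI : I = M • (1 : Matrix (Fin 3) (Fin 3) ℝ) - ∑ i, m i • vecMulVec (q i) (q i))
    (J : Matrix (Fin 3) (Fin 3) ℝ)
    (hJ : ∀ i j, J i j = (if i = j then M else 0) - Real.sqrt (m i * m j) * (q i ⬝ᵥ q j))
    (u12 u23 u31 : ℝ) (hu12 : u12 ≠ 0) (hu23 : u23 ≠ 0) (hu31 : u31 ≠ 0)
    (lam : ℝ) (e : Fin 3 → ℝ) (he : e ⬝ᵥ e = 1) (heig : I *ᵥ e = lam • e)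
    (δ : ℝ) (hδ : δ ≠ 0)
    (h1 : u23 * (q 0 ⬝ᵥ e) = δ) (h2 : u31 * (q 1 ⬝ᵥ e) = δ)
    (h3 : u12 * (q 2 ⬝ᵥ e) = δ)
    (w : Fin 3 → ℝ)
    (hw : w = ![Real.sqrt (m 0) / u23, Real.sqrt (m 1) / u31, Real.sqrt (m 2) / u12]) :
    J *ᵥ w = lam • w := by
  -- the key identity from the eigenvector equation
  have key : ∀ r : Fin 3, m 0 * (q 0 ⬝ᵥ e) * (q r ⬝ᵥ q 0) + m 1 * (q 1 ⬝ᵥ e) * (q r ⬝ᵥ q 1)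
      + m 2 * (q 2 ⬝ᵥ e) * (q r ⬝ᵥ q 2) = (M - lam) * (q r ⬝ᵥ e) := by
    intro r
    have h := congrArg (fun v => q r ⬝ᵥ v) heig
    simp only [hI, dotProduct, mulVec, Fin.sum_univ_three, Matrix.sub_apply, Matrix.smul_apply,
      Matrix.one_apply, Matrix.add_apply, Matrix.vecMulVec_apply, Pi.smul_apply,
      smul_eq_mul] at h ⊢
    norm_num [Fin.ext_iff] at h
    linear_combination -h
  have c0 : q 0 ⬝ᵥ e = δ / u23 := by rw [eq_div_iff hu23]; linear_combination h1
  have c1 : q 1 ⬝ᵥ e = δ / u31 := by rw [eq_div_iff hu31]; linear_combination h2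
  have c2 : q 2 ⬝ᵥ e = δ / u12 := by rw [eq_div_iff hu12]; linear_combination h3
  -- cleared versions of the key identity
  have K0 : m 0 * (q 0 ⬝ᵥ q 0) * u31 * u12 + m 1 * (q 0 ⬝ᵥ q 1) * u23 * u12
      + m 2 * (q 0 ⬝ᵥ q 2) * u23 * u31 = (M - lam) * u31 * u12 := by
    have h := key 0; rw [c0, c1, c2] at h
    field_simp at h
    apply mul_left_cancel₀ (mul_ne_zero hδ hu23)
    simp only [dotProduct, Fin.sum_univ_three] at h ⊢
    linear_combination (δ * u23) * h
  have K1 : m 0 * (q 1 ⬝ᵥ q 0) * u31 * u12 + m 1 * (q 1 ⬝ᵥ q 1) * u23 * u12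
      + m 2 * (q 1 ⬝ᵥ q 2) * u23 * u31 = (M - lam) * u23 * u12 := by
    have h := key 1; rw [c0, c1, c2] at h
    field_simp at h
    apply mul_left_cancel₀ (mul_ne_zero hδ hu31)
    simp only [dotProduct, Fin.sum_univ_three] at h ⊢
    linear_combination (δ * u31) * h
  have K2 : m 0 * (q 2 ⬝ᵥ q 0) * u31 * u12 + m 1 * (q 2 ⬝ᵥ q 1) * u23 * u12
      + m 2 * (q 2 ⬝ᵥ q 2) * u23 * u31 = (M - lam) * u23 * u31 := by
    have h := key 2; rw [c0, c1, c2] at h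
    field_simp at h
    apply mul_left_cancel₀ (mul_ne_zero hδ hu12)
    simp only [dotProduct, Fin.sum_univ_three] at h ⊢
    linear_combination (δ * u12) * h
  have s0 := Real.sq_sqrt (hm 0).le
  have s1 := Real.sq_sqrt (hm 1).le
  have s2 := Real.sq_sqrt (hm 2).le
  have sm : ∀ i j : Fin 3, Real.sqrt (m i * m j) = Real.sqrt (m i) * Real.sqrt (m j) :=
    fun i j => Real.sqrt_mul (hm i).le _
  funext i
  simp only [mulVec, dotProduct, Fin.sum_univ_three, hw, Pi.smul_apply, smul_eq_mul, hJ, sm]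
  fin_cases i <;>
    simp only [Matrix.cons_val_zero, Matrix.cons_val_one, Matrix.head_cons,
      Matrix.cons_val_two, Matrix.tail_cons, Fin.isValue, Fin.reduceFinMk] <;>
    norm_num [Fin.ext_iff]
  · simp only [dotProduct, Fin.sum_univ_three] at K0
    rw [← s0, ← s1, ← s2] at K0
    field_simp
    linear_combination (-Real.sqrt (m 0)) * K0
  · simp only [dotProduct, Fin.sum_univ_three] at K1
    rw [← s0, ← s1, ← s2] at K1
    field_simp
    linear_combination (-Real.sqrt (m 1)) * K1
  · simp only [dotProduct, Fin.sum_univ_three] at K2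
    rw [← s0, ← s1, ← s2] at K2
    field_simp
    linear_combination (-Real.sqrt (m 2)) * K2
end

section
/- (Angular velocity of a Lagrange relative equilibrium.) Let m₁, m₂, m₃ > 0, let u₁₂, u₂₃, u₃₁ be nonzero reals, and suppose c₁, c₂, c₃ are nonzero reals (playing the role of cos θ_k) and ω ∈ ℝ satisfy u_ij = ω² c_i c_j / (∑_{k=1}^{3} m_k c_k²) for each pair (i,j) ∈ {(1,2),(2,3),(3,1)}. Then ω² = u₁₂ u₂₃ u₃₁ · (m₁/u₂₃² + m₂/u₃₁² + m₃/u₁₂²). -/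
/-- (Angular velocity of a Lagrange relative equilibrium.)
If nonzero `c₁, c₂, c₃` and `ω` satisfy `u_ij = ω² cᵢ cⱼ / (∑ mₖ cₖ²)` for the three
pairs, then `ω² = u₁₂ u₂₃ u₃₁ (m₁/u₂₃² + m₂/u₃₁² + m₃/u₁₂²)`. -/
theorem stmt16 (m1 m2 m3 : ℝ) (hm1 : 0 < m1) (hm2 : 0 < m2) (hm3 : 0 < m3)
    (u12 u23 u31 : ℝ) (hu12 : u12 ≠ 0) (hu23 : u23 ≠ 0) (hu31 : u31 ≠ 0)
    (c1 c2 c3 ω : ℝ) (hc1 : c1 ≠ 0) (hc2 : c2 ≠ 0) (hc3 : c3 ≠ 0)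
    (h12 : u12 = ω ^ 2 * c1 * c2 / (m1 * c1 ^ 2 + m2 * c2 ^ 2 + m3 * c3 ^ 2))
    (h23 : u23 = ω ^ 2 * c2 * c3 / (m1 * c1 ^ 2 + m2 * c2 ^ 2 + m3 * c3 ^ 2))
    (h31 : u31 = ω ^ 2 * c3 * c1 / (m1 * c1 ^ 2 + m2 * c2 ^ 2 + m3 * c3 ^ 2)) :
    ω ^ 2 = u12 * u23 * u31 * (m1 / u23 ^ 2 + m2 / u31 ^ 2 + m3 / u12 ^ 2) := by
  have hS : m1 * c1 ^ 2 + m2 * c2 ^ 2 + m3 * c3 ^ 2 ≠ 0 := by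
    intro h
    rw [h, div_zero] at h12
    exact hu12 h12
  have hw : ω ≠ 0 := by
    intro h
    rw [h] at h12
    simp at h12
    exact hu12 h12
  subst h12 h23 h31
  field_simp
end

section
/- (Sufficient condition on the shape for a Lagrange relative equilibrium.) Let u₁₂, u₂₃, u₃₁ > 0, set N = √(m₁/u₂₃² + m₂/u₃₁² + m₃/u₁₂²) and Ψ_L = (√(m₁)/u₂₃, √(m₂)/u₃₁, √(m₃)/u₁₂)ᵀ / N. Suppose J Ψ_L = λ Ψ_L for some λ < M. Then there exists a unit vector e ∈ ℝ³ with I e = λ e such that the numbers c_k := (q_k · e) satisfy c₁ = √(M−λ)/(u₂₃ N), c₂ = √(M−λ)/(u₃₁ N), c₃ = √(M−λ)/(u₁₂ N), and, with ω² := u₁₂ u₂₃ u₃₁ (m₁/u₂₃² + m₂/u₃₁² + m₃/u₁₂²) > 0, the Lagrange relations u_ij = ω² c_i c_j / (∑_{k=1}^{3} m_k c_k²) hold for each pair (i,j) ∈ {(1,2),(2,3),(3,1)}. -/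
open Matrix BigOperators

set_option maxHeartbeats 1000000

/-- (Sufficient condition on the shape for a Lagrange relative
equilibrium.) Let `u₁₂, u₂₃, u₃₁ > 0`, `N = √(m₁/u₂₃² + m₂/u₃₁² + m₃/u₁₂²)` and
`Ψ_L = (√m₁/u₂₃, √m₂/u₃₁, √m₃/u₁₂)ᵀ/N`. If `J Ψ_L = λ Ψ_L` with `λ < M`, then there
is a unit vector `e` with `I e = λ e`, `cₖ := qₖ · e` given by
`c₁ = √(M−λ)/(u₂₃ N)`, `c₂ = √(M−λ)/(u₃₁ N)`, `c₃ = √(M−λ)/(u₁₂ N)`, and with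
`ω² := u₁₂ u₂₃ u₃₁ (m₁/u₂₃² + m₂/u₃₁² + m₃/u₁₂²) > 0` the Lagrange relations
`u_ij = ω² cᵢ cⱼ/(∑ mₖ cₖ²)` hold. -/
theorem stmt17 (m : Fin 3 → ℝ) (hm : ∀ i, 0 < m i)
    (q : Fin 3 → Fin 3 → ℝ) (hq : ∀ i, q i ⬝ᵥ q i = 1)
    (M : ℝ) (hM : M = ∑ i, m i)
    (I : Matrix (Fin 3) (Fin 3) ℝ)
    (hI : I = M • (1 : Matrix (Fin 3) (Fin 3) ℝ) - ∑ i, m i • vecMulVec (q i) (q i))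
    (J : Matrix (Fin 3) (Fin 3) ℝ)
    (hJ : ∀ i j, J i j = (if i = j then M else 0) - Real.sqrt (m i * m j) * (q i ⬝ᵥ q j))
    (u12 u23 u31 : ℝ) (hu12 : 0 < u12) (hu23 : 0 < u23) (hu31 : 0 < u31)
    (N : ℝ) (hN : N = Real.sqrt (m 0 / u23 ^ 2 + m 1 / u31 ^ 2 + m 2 / u12 ^ 2))
    (ΨL : Fin 3 → ℝ)
    (hΨ : ΨL = N⁻¹ • ![Real.sqrt (m 0) / u23, Real.sqrt (m 1) / u31,
      Real.sqrt (m 2) / u12])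
    (lam : ℝ) (hlam : lam < M) (heig : J *ᵥ ΨL = lam • ΨL) :
    ∃ e : Fin 3 → ℝ, e ⬝ᵥ e = 1 ∧ I *ᵥ e = lam • e ∧
      q 0 ⬝ᵥ e = Real.sqrt (M - lam) / (u23 * N) ∧
      q 1 ⬝ᵥ e = Real.sqrt (M - lam) / (u31 * N) ∧
      q 2 ⬝ᵥ e = Real.sqrt (M - lam) / (u12 * N) ∧
      (0 < u12 * u23 * u31 * (m 0 / u23 ^ 2 + m 1 / u31 ^ 2 + m 2 / u12 ^ 2) ∧
        u12 = (u12 * u23 * u31 * (m 0 / u23 ^ 2 + m 1 / u31 ^ 2 + m 2 / u12 ^ 2))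
            * (q 0 ⬝ᵥ e) * (q 1 ⬝ᵥ e)
            / (m 0 * (q 0 ⬝ᵥ e) ^ 2 + m 1 * (q 1 ⬝ᵥ e) ^ 2 + m 2 * (q 2 ⬝ᵥ e) ^ 2) ∧
        u23 = (u12 * u23 * u31 * (m 0 / u23 ^ 2 + m 1 / u31 ^ 2 + m 2 / u12 ^ 2))
            * (q 1 ⬝ᵥ e) * (q 2 ⬝ᵥ e)
            / (m 0 * (q 0 ⬝ᵥ e) ^ 2 + m 1 * (q 1 ⬝ᵥ e) ^ 2 + m 2 * (q 2 ⬝ᵥ e) ^ 2) ∧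
        u31 = (u12 * u23 * u31 * (m 0 / u23 ^ 2 + m 1 / u31 ^ 2 + m 2 / u12 ^ 2))
            * (q 2 ⬝ᵥ e) * (q 0 ⬝ᵥ e)
            / (m 0 * (q 0 ⬝ᵥ e) ^ 2 + m 1 * (q 1 ⬝ᵥ e) ^ 2 + m 2 * (q 2 ⬝ᵥ e) ^ 2)) := by
  have hm0 := hm 0; have hm1 := hm 1; have hm2 := hm 2
  have hMl : 0 < M - lam := by linarith
  have hSpos : 0 < m 0 / u23 ^ 2 + m 1 / u31 ^ 2 + m 2 / u12 ^ 2 := by positivity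
  have hNpos : 0 < N := by rw [hN]; exact Real.sqrt_pos.mpr hSpos
  have hN2 : N ^ 2 = m 0 / u23 ^ 2 + m 1 / u31 ^ 2 + m 2 / u12 ^ 2 := by
    rw [hN]; exact Real.sq_sqrt hSpos.le
  set s0 := Real.sqrt (m 0) with hs0d
  set s1 := Real.sqrt (m 1) with hs1d
  set s2 := Real.sqrt (m 2) with hs2d
  have hs0 : 0 < s0 := Real.sqrt_pos.mpr hm0
  have hs1 : 0 < s1 := Real.sqrt_pos.mpr hm1
  have hs2 : 0 < s2 := Real.sqrt_pos.mpr hm2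
  have hs0sq : s0 ^ 2 = m 0 := Real.sq_sqrt hm0.le
  have hs1sq : s1 ^ 2 = m 1 := Real.sq_sqrt hm1.le
  have hs2sq : s2 ^ 2 = m 2 := Real.sq_sqrt hm2.le
  set st := Real.sqrt (M - lam) with hstd
  have hst : 0 < st := Real.sqrt_pos.mpr hMl
  have hstsq : st ^ 2 = M - lam := Real.sq_sqrt hMl.le
  have hΨ0 : ΨL 0 = s0 / (u23 * N) := by rw [hΨ]; simp [div_div]; ring
  have hΨ1 : ΨL 1 = s1 / (u31 * N) := by rw [hΨ]; simp [div_div]; ring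
  have hΨ2 : ΨL 2 = s2 / (u12 * N) := by rw [hΨ]; simp [div_div]; ring
  have hsq : ∀ i j : Fin 3, Real.sqrt (m i * m j) = Real.sqrt (m i) * Real.sqrt (m j) :=
    fun i j => Real.sqrt_mul (hm i).le _
  have hq0 : q 0 0 * q 0 0 + q 0 1 * q 0 1 + q 0 2 * q 0 2 = 1 := by
    simpa [dotProduct, Fin.sum_univ_three] using hq 0
  have hq1 : q 1 0 * q 1 0 + q 1 1 * q 1 1 + q 1 2 * q 1 2 = 1 := by
    simpa [dotProduct, Fin.sum_univ_three] using hq 1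
  have hq2 : q 2 0 * q 2 0 + q 2 1 * q 2 1 + q 2 2 * q 2 2 = 1 := by
    simpa [dotProduct, Fin.sum_univ_three] using hq 2
  have h0 := congrFun heig 0
  have h1 := congrFun heig 1
  have h2 := congrFun heig 2
  simp only [Matrix.mulVec, dotProduct, Fin.sum_univ_three, hJ, Pi.smul_apply,
    smul_eq_mul, hsq] at h0 h1 h2
  norm_num [Fin.ext_iff] at h0 h1 h2
  rw [hq0] at h0; rw [hq1] at h1; rw [hq2] at h2
  -- key scalar identities: s_i * (q i ⬝ᵥ v) = (M - lam) * ΨL i, where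
  -- v = s0 ΨL0 q0 + s1 ΨL1 q1 + s2 ΨL2 q2 (componentwise)
  set D01 := q 0 0 * q 1 0 + q 0 1 * q 1 1 + q 0 2 * q 1 2 with hD01
  set D02 := q 0 0 * q 2 0 + q 0 1 * q 2 1 + q 0 2 * q 2 2 with hD02
  set D12 := q 1 0 * q 2 0 + q 1 1 * q 2 1 + q 1 2 * q 2 2 with hD12
  have k0 : s0 * (s0 * ΨL 0 + s1 * ΨL 1 * D01 + s2 * ΨL 2 * D02) = (M - lam) * ΨL 0 := by
    linear_combination -h0
  have k1 : s1 * (s0 * ΨL 0 * D01 + s1 * ΨL 1 + s2 * ΨL 2 * D12) = (M - lam) * ΨL 1 := by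
    linear_combination -h1
  have k2 : s2 * (s0 * ΨL 0 * D02 + s1 * ΨL 1 * D12 + s2 * ΨL 2) = (M - lam) * ΨL 2 := by
    linear_combination -h2
  rw [hΨ0, hΨ1, hΨ2] at k0 k1 k2
  field_simp at k0 k1 k2
  have hC0 : (0:ℝ) < s0 * u23 * N ^ 3 := by positivity
  have hC1 : (0:ℝ) < s1 * u31 * N ^ 3 := by positivity
  have hC2 : (0:ℝ) < s2 * u12 * N ^ 3 := by positivity
  have K0 : m 0 * (u31 * u12) + m 1 * D01 * (u23 * u12) + m 2 * D02 * (u23 * u31)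
      = (M - lam) * (u31 * u12) := by
    refine mul_left_cancel₀ hC0.ne' ?_
    linear_combination (s0*u23*N^3) * k0 - (s0*u23*N^3*u31*u12) * hs0sq - (s0*u23*N^3*u23*u12*D01) * hs1sq
      - (s0*u23*N^3*u23*u31*D02) * hs2sq
  have K1 : m 0 * D01 * (u31 * u12) + m 1 * (u23 * u12) + m 2 * D12 * (u23 * u31)
      = (M - lam) * (u23 * u12) := by
    refine mul_left_cancel₀ hC1.ne' ?_
    linear_combination (s1*u31*N^3) * k1 - (s1*u31*N^3*u31*u12*D01) * hs0sq - (s1*u31*N^3*u23*u12) * hs1sq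
      - (s1*u31*N^3*u23*u31*D12) * hs2sq
  have K2 : m 0 * D02 * (u31 * u12) + m 1 * D12 * (u23 * u12) + m 2 * (u23 * u31)
      = (M - lam) * (u23 * u31) := by
    refine mul_left_cancel₀ hC2.ne' ?_
    linear_combination (s2*u12*N^3) * k2 - (s2*u12*N^3*u31*u12*D02) * hs0sq - (s2*u12*N^3*u23*u12*D12) * hs1sq
      - (s2*u12*N^3*u23*u31) * hs2sq
  have hN2' : N ^ 2 * (u23 ^ 2 * u31 ^ 2 * u12 ^ 2)
      = m 0 * (u31 ^ 2 * u12 ^ 2) + m 1 * (u23 ^ 2 * u12 ^ 2) + m 2 * (u23 ^ 2 * u31 ^ 2) := by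
    rw [hN2]
    field_simp
  set e : Fin 3 → ℝ :=
    fun x => (st*N)⁻¹ * (m 0/u23 * q 0 x + m 1/u31 * q 1 x + m 2/u12 * q 2 x) with he
  have hc0 : q 0 ⬝ᵥ e = st / (u23 * N) := by
    simp only [dotProduct, Fin.sum_univ_three, he]
    field_simp
    linear_combination (m 0*u31*u12)*hq0 + K0 - (u31*u12)*hstsq
  have hc1 : q 1 ⬝ᵥ e = st / (u31 * N) := by
    simp only [dotProduct, Fin.sum_univ_three, he]
    field_simp
    linear_combination (m 1*u23*u12)*hq1 + K1 - (u23*u12)*hstsq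
  have hc2 : q 2 ⬝ᵥ e = st / (u12 * N) := by
    simp only [dotProduct, Fin.sum_univ_three, he]
    field_simp
    linear_combination (m 2*u23*u31)*hq2 + K2 - (u23*u31)*hstsq
  have hee : e ⬝ᵥ e = (st*N)⁻¹ * (m 0/u23 * (q 0 ⬝ᵥ e) + m 1/u31 * (q 1 ⬝ᵥ e)
      + m 2/u12 * (q 2 ⬝ᵥ e)) := by
    simp only [dotProduct, Fin.sum_univ_three, he]; ring
  have hIent : ∀ x y, I x y = (if x = y then M else 0)
      - (m 0 * q 0 x * q 0 y + m 1 * q 1 x * q 1 y + m 2 * q 2 x * q 2 y) := by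
    intro x y
    simp [hI, Matrix.sum_apply, Fin.sum_univ_three, vecMulVec_apply, Matrix.one_apply]
    ring
  have hIe : ∀ x, (I *ᵥ e) x = M * e x - (m 0 * (q 0 ⬝ᵥ e) * q 0 x
      + m 1 * (q 1 ⬝ᵥ e) * q 1 x + m 2 * (q 2 ⬝ᵥ e) * q 2 x) := by
    intro x
    simp only [Matrix.mulVec, dotProduct, Fin.sum_univ_three, hIent]
    fin_cases x <;> simp [Fin.ext_iff] <;> ring
  have hden : m 0 * (st/(u23*N))^2 + m 1 * (st/(u31*N))^2 + m 2 * (st/(u12*N))^2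
      = M - lam := by
    field_simp
    linear_combination (m 0*(u31^2*u12^2)+m 1*(u23^2*u12^2)+m 2*(u23^2*u31^2))*hstsq
      - (M-lam)*hN2'
  refine ⟨e, ?_, ?_, hc0, hc1, hc2, by positivity, ?_, ?_, ?_⟩
  · rw [hee, hc0, hc1, hc2]
    field_simp
    linear_combination -hN2'
  · funext x
    rw [hIe x, hc0, hc1, hc2]
    show _ = lam * e x
    simp only [he]
    field_simp
    linear_combination (-((m 0 * q 0 x * u31 + u23 * m 1 * q 1 x) * u12 + u23 * u31 * m 2 * q 2 x))*hstsq
  · rw [hc0, hc1, hc2, hden, ← hstsq]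
    field_simp
    linear_combination hN2'
  · rw [hc0, hc1, hc2, hden, ← hstsq]
    field_simp
    linear_combination hN2'
  · rw [hc0, hc1, hc2, hden, ← hstsq]
    field_simp
    linear_combination hN2'
end

section
/- (Equilateral Lagrange relative equilibrium requires equal masses.) Let m₁, m₂, m₃ > 0 and σ ∈ ℝ with cos σ ≠ 1, and let J be the 3×3 matrix with diagonal entries (m₂+m₃, m₃+m₁, m₁+m₂) and off-diagonal entries J_{ij} = −√(m_i m_j) cos σ for i ≠ j. If the vector (√(m₁), √(m₂), √(m₃))ᵀ is an eigenvector of J, then m₁ = m₂ = m₃. -/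
open Matrix

/-- (An equilateral Lagrange relative equilibrium requires equal masses.)
If `(√m₁, √m₂, √m₃)ᵀ` is an eigenvector of the matrix `J` of an equilateral
configuration (all mutual cosines equal to `cos σ ≠ 1`), then `m₁ = m₂ = m₃`. -/
theorem stmt18 (m1 m2 m3 : ℝ) (hm1 : 0 < m1) (hm2 : 0 < m2) (hm3 : 0 < m3)
    (σ : ℝ) (hσ : Real.cos σ ≠ 1)
    (J : Matrix (Fin 3) (Fin 3) ℝ)
    (hJ : J = !![m2 + m3, -(Real.sqrt (m1 * m2) * Real.cos σ),
        -(Real.sqrt (m1 * m3) * Real.cos σ);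
      -(Real.sqrt (m2 * m1) * Real.cos σ), m3 + m1,
        -(Real.sqrt (m2 * m3) * Real.cos σ);
      -(Real.sqrt (m3 * m1) * Real.cos σ), -(Real.sqrt (m3 * m2) * Real.cos σ),
        m1 + m2])
    (lam : ℝ)
    (heig : J *ᵥ ![Real.sqrt m1, Real.sqrt m2, Real.sqrt m3]
      = lam • ![Real.sqrt m1, Real.sqrt m2, Real.sqrt m3]) :
    m1 = m2 ∧ m2 = m3 := by
  subst hJ
  set c := Real.cos σ with hc
  have s1 : (0:ℝ) < Real.sqrt m1 := Real.sqrt_pos.2 hm1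
  have s2 : (0:ℝ) < Real.sqrt m2 := Real.sqrt_pos.2 hm2
  have s3 : (0:ℝ) < Real.sqrt m3 := Real.sqrt_pos.2 hm3
  have q1 : Real.sqrt m1 * Real.sqrt m1 = m1 := Real.mul_self_sqrt hm1.le
  have q2 : Real.sqrt m2 * Real.sqrt m2 = m2 := Real.mul_self_sqrt hm2.le
  have q3 : Real.sqrt m3 * Real.sqrt m3 = m3 := Real.mul_self_sqrt hm3.le
  have h0 := congrFun heig 0
  have h1 := congrFun heig 1
  have h2 := congrFun heig 2
  simp [mulVec, dotProduct, Fin.sum_univ_three,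
    Real.sqrt_mul hm1.le, Real.sqrt_mul hm2.le, Real.sqrt_mul hm3.le] at h0 h1 h2
  -- h0 : (m2+m3)*√m1 + -(√m1*√m2*c)*√m2 + -(√m1*√m3*c)*√m3 = lam * √m1
  have e1 : (m2 + m3) * (1 - c) = lam := by
    have : Real.sqrt m1 * ((m2 + m3) * (1 - c) - lam) = 0 := by linear_combination h0 + Real.sqrt m1 * c * q2 + Real.sqrt m1 * c * q3
    have := (mul_eq_zero.1 this).resolve_left s1.ne'
    linarith
  have e2 : (m3 + m1) * (1 - c) = lam := by
    have : Real.sqrt m2 * ((m3 + m1) * (1 - c) - lam) = 0 := by linear_combination h1 + Real.sqrt m2 * c * q1 + Real.sqrt m2 * c * q3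
    have := (mul_eq_zero.1 this).resolve_left s2.ne'
    linarith
  have e3 : (m1 + m2) * (1 - c) = lam := by
    have : Real.sqrt m3 * ((m1 + m2) * (1 - c) - lam) = 0 := by linear_combination h2 + Real.sqrt m3 * c * q1 + Real.sqrt m3 * c * q2
    have := (mul_eq_zero.1 this).resolve_left s3.ne'
    linarith
  have hc1 : (1 : ℝ) - c ≠ 0 := sub_ne_zero.2 (Ne.symm hσ)
  constructor
  · have := e1.trans e2.symm
    have h := mul_right_cancel₀ hc1 this
    linarith
  · have := e2.trans e3.symm
    have h := mul_right_cancel₀ hc1 this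
    linarith
end

section
/- (No Lagrange relative equilibrium for a repulsive force.) Let m₁, m₂, m₃ > 0 and let u₁₂, u₂₃, u₃₁ < 0. Then there exist no reals c₁, c₂, c₃ with c_k ≠ 0 for k = 1,2,3 and no ω ∈ ℝ such that u_ij = ω² c_i c_j / (∑_{k=1}^{3} m_k c_k²) holds for all three pairs (i,j) ∈ {(1,2),(2,3),(3,1)}. -/
/-- (No Lagrange relative equilibrium for a repulsive force.)
If `u₁₂, u₂₃, u₃₁ < 0`, there are no nonzero reals `c₁, c₂, c₃` and no `ω ∈ ℝ`
satisfying the Lagrange relations `u_ij = ω² cᵢ cⱼ / (∑ mₖ cₖ²)`. -/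
theorem stmt19 (m1 m2 m3 : ℝ) (hm1 : 0 < m1) (hm2 : 0 < m2) (hm3 : 0 < m3)
    (u12 u23 u31 : ℝ) (hu12 : u12 < 0) (hu23 : u23 < 0) (hu31 : u31 < 0) :
    ¬ ∃ c1 c2 c3 ω : ℝ, c1 ≠ 0 ∧ c2 ≠ 0 ∧ c3 ≠ 0 ∧
      u12 = ω ^ 2 * c1 * c2 / (m1 * c1 ^ 2 + m2 * c2 ^ 2 + m3 * c3 ^ 2) ∧
      u23 = ω ^ 2 * c2 * c3 / (m1 * c1 ^ 2 + m2 * c2 ^ 2 + m3 * c3 ^ 2) ∧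
      u31 = ω ^ 2 * c3 * c1 / (m1 * c1 ^ 2 + m2 * c2 ^ 2 + m3 * c3 ^ 2) := by
  rintro ⟨c1, c2, c3, ω, h1, h2, h3, e12, e23, e31⟩
  have hD : 0 < m1 * c1 ^ 2 + m2 * c2 ^ 2 + m3 * c3 ^ 2 := by positivity
  have hneg : u12 * u23 * u31 < 0 := by
    have := mul_pos (mul_pos_of_neg_of_neg hu12 hu23) (neg_pos.mpr hu31)
    nlinarith
  have hnonneg : 0 ≤ u12 * u23 * u31 := by
    rw [e12, e23, e31]
    rw [div_mul_div_comm, div_mul_div_comm]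
    apply div_nonneg
    · nlinarith [sq_nonneg (ω ^ 3 * (c1 * c2 * c3)), sq_nonneg ω, sq_nonneg (c1*c2*c3)]
    · positivity
  linarith
end
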